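/- arXiv:2105.13167 — 2 statements merged into one kernel-verified Lean document; each statement's English description precedes it below -/
import Mathlib

section
/- Let Q be the power series k-algebra in e ≥ 3 variables, I1, I2 ⊆ q^2 homogeneous q-primary ideals with compressed Gorenstein quotients R1, R2 of socle degrees s1 ≤ s2, and assume R = Q/(I1 ∩ I2) is compressed of type 2 with socle degree s and initial degree t. Then h_R(i) = min{h_Q(i), h_{R1}(i) + h_{R2}(i)} for all i ≥ 0, and t = min{ i : h_Q(i) > h_{R1}(i) + h_{R2}(i) }. -/
open MvPolynomial

/-- The ideal generated by the variables (the graded maximal ideal `q`). -/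
noncomputable def qIdeal (k : Type*) [Field k] (e : ℕ) : Ideal (MvPolynomial (Fin e) k) :=
  Ideal.span (Set.range X)

/-- The Hilbert function of `Q/J`: `h(i) = dim_k (q^i + J)/(q^{i+1} + J)`. -/
noncomputable def hilb (k : Type*) [Field k] (e : ℕ)
    (J : Ideal (MvPolynomial (Fin e) k)) (i : ℕ) : ℕ :=
  Module.finrank k
    (((qIdeal k e ^ i ⊔ J).map (Ideal.Quotient.mk (qIdeal k e ^ (i + 1) ⊔ J))).restrictScalars k)

/-- An ideal is homogeneous if it is generated by homogeneous polynomials. -/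
def IsHomogeneousIdeal (k : Type*) [Field k] (e : ℕ)
    (J : Ideal (MvPolynomial (Fin e) k)) : Prop :=
  ∃ S : Set (MvPolynomial (Fin e) k),
    (∀ p ∈ S, ∃ n, MvPolynomial.IsHomogeneous p n) ∧ J = Ideal.span S

/-- Hilbert function of the ambient ring: `h_Q(i) = binom(e−1+i, e−1)`. -/
def hQ (e i : ℕ) : ℕ := Nat.choose (e - 1 + i) (e - 1)

/-- `h_Q(σ − i)`, interpreted as `0` for `i > σ`. -/
def hQat (e σ i : ℕ) : ℕ := if i ≤ σ then hQ e (σ - i) else 0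

/-- `Q/J` has type 1 (is artinian Gorenstein): the socle `(J : q)/J` is spanned
by one nonzero element. -/
def HasTypeOne (k : Type*) [Field k] (e : ℕ) (J : Ideal (MvPolynomial (Fin e) k)) : Prop :=
  ∃ x, x ∉ J ∧ J.colon (qIdeal k e) = J ⊔ Ideal.span {x}

/-- `Q/J` has type 2: the socle `(J : q)/J` is spanned by two elements whose
cosets are linearly independent over `k`. -/
def HasTypeTwo (k : Type*) [Field k] (e : ℕ) (J : Ideal (MvPolynomial (Fin e) k)) : Prop :=
  ∃ x y, J.colon (qIdeal k e) = J ⊔ Ideal.span {x, y} ∧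
    ∀ a b : MvPolynomial (Fin e) k, a * x + b * y ∈ J →
      a ∈ qIdeal k e ∧ b ∈ qIdeal k e

/-- `σ` is the socle degree of `Q/J`. -/
def SocDeg (k : Type*) [Field k] (e : ℕ) (J : Ideal (MvPolynomial (Fin e) k)) (σ : ℕ) : Prop :=
  ¬ qIdeal k e ^ σ ≤ J ∧ qIdeal k e ^ (σ + 1) ≤ J

/-- `τ` is the initial degree of `J`. -/
def IniDeg (k : Type*) [Field k] (e : ℕ) (J : Ideal (MvPolynomial (Fin e) k)) (τ : ℕ) : Prop :=
  J ≤ qIdeal k e ^ τ ∧ ¬ J ≤ qIdeal k e ^ (τ + 1)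

/-- `Q/J` is a compressed Gorenstein ring of socle degree `σ`. -/
def CompressedGor (k : Type*) [Field k] (e : ℕ) (J : Ideal (MvPolynomial (Fin e) k)) (σ : ℕ) : Prop :=
  ∀ i, hilb k e J i = min (hQ e i) (hQat e σ i)

section
variable {k : Type*} [Field k] {e : ℕ}

lemma Finsupp.degree_add' (a b : Fin e →₀ ℕ) :
    Finsupp.degree (a + b) = Finsupp.degree a + Finsupp.degree b := by
  simp only [Finsupp.degree_eq_weight_one]; exact map_add _ _ _

/-- polynomials all of whose monomials have degree ≥ m -/
def degIdeal (k : Type*) [Field k] (e m : ℕ) : Ideal (MvPolynomial (Fin e) k) where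
  carrier := {p | ∀ u ∈ p.support, m ≤ Finsupp.degree u}
  add_mem' := by
    intro a b ha hb u hu
    rcases Finset.mem_union.1 (MvPolynomial.support_add hu) with h | h
    exacts [ha u h, hb u h]
  zero_mem' := by intro u hu; simp at hu
  smul_mem' := by
    intro c p hp u hu
    rw [smul_eq_mul] at hu
    obtain ⟨v, hv, w, hw, rfl⟩ := Finset.mem_add.1 (MvPolynomial.support_mul c p hu)
    rw [Finsupp.degree_add']
    exact le_add_of_le_right (hp w hw)

lemma X_mem_q (j : Fin e) : (X j : MvPolynomial (Fin e) k) ∈ qIdeal k e :=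
  Ideal.subset_span ⟨j, rfl⟩

lemma q_le_degIdeal_one : qIdeal k e ≤ degIdeal k e 1 := by
  rw [qIdeal, Ideal.span_le]
  rintro _ ⟨j, rfl⟩ u hu
  rw [MvPolynomial.support_X] at hu
  simp only [Finset.mem_singleton] at hu
  subst hu
  simp [Finsupp.degree_single]

lemma pow_le_degIdeal (m : ℕ) : qIdeal k e ^ m ≤ degIdeal k e m := by
  induction m with
  | zero => intro p _ u _; exact Nat.zero_le _
  | succ n ih =>
    rw [pow_succ, Ideal.mul_le]
    intro a ha b hb u hu
    obtain ⟨v, hv, w, hw, rfl⟩ := Finset.mem_add.1 (MvPolynomial.support_mul a b hu)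
    rw [Finsupp.degree_add']
    exact Nat.add_le_add (ih ha v hv) (q_le_degIdeal_one hb w hw)

/-- P2 : low homogeneous components of elements of q^m vanish. -/
lemma homogeneousComponent_eq_zero_of_mem_pow {p : MvPolynomial (Fin e) k} {m d : ℕ}
    (hp : p ∈ qIdeal k e ^ m) (hd : d < m) : homogeneousComponent d p = 0 := by
  apply homogeneousComponent_eq_zero'
  intro u hu
  exact Nat.ne_of_gt (lt_of_lt_of_le hd (pow_le_degIdeal m hp u hu))

/-- monomials lie in the corresponding power of q -/
lemma monomial_mem_pow (u : Fin e →₀ ℕ) (c : k) :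
    monomial u c ∈ qIdeal k e ^ (Finsupp.degree u) := by
  induction u using Finsupp.induction with
  | zero => simp
  | single_add a n f han hn ih =>
    have hds : Finsupp.degree (Finsupp.single a n) = n := by
      simp [Finsupp.degree_single]
    rw [MvPolynomial.monomial_single_add, Finsupp.degree_add', hds, pow_add]
    exact Ideal.mul_mem_mul (Ideal.pow_mem_pow (X_mem_q a) _) ih
lemma mem_pow_of_isHomogeneous {p : MvPolynomial (Fin e) k} {d m : ℕ}
    (hp : p.IsHomogeneous d) (hm : m ≤ d) : p ∈ qIdeal k e ^ m := by
  have : p ∈ qIdeal k e ^ d := by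
    rw [← MvPolynomial.support_sum_monomial_coeff p]
    refine Ideal.sum_mem _ (fun u hu => ?_)
    have hdeg : Finsupp.degree u = d := by
      by_contra hne
      exact (MvPolynomial.mem_support_iff.1 hu) (hp.coeff_eq_zero hne)
    simpa [hdeg] using monomial_mem_pow u (MvPolynomial.coeff u p)
  exact Ideal.pow_le_pow_right hm this

/-- sum of homogeneous components over any sufficiently big range -/
lemma sum_comp {p : MvPolynomial (Fin e) k} {M : ℕ} (h : p.totalDegree < M) :
    ∑ d ∈ Finset.range M, homogeneousComponent d p = p := by
  calc ∑ d ∈ Finset.range M, homogeneousComponent d p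
      = ∑ d ∈ Finset.range (p.totalDegree + 1), homogeneousComponent d p := by
        symm
        apply Finset.sum_subset
        · exact Finset.range_subset_range.2 (by omega)
        · intro d _ hd
          simp only [Finset.mem_range, not_lt] at hd
          exact homogeneousComponent_eq_zero _ _ (by omega)
    _ = p := MvPolynomial.sum_homogeneousComponent p

/-- closure of an ideal under taking homogeneous components -/
def HomCl (J : Ideal (MvPolynomial (Fin e) k)) : Prop :=
  ∀ p ∈ J, ∀ d, homogeneousComponent d p ∈ J

lemma isHomogeneousIdeal_homCl {J : Ideal (MvPolynomial (Fin e) k)}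
    (hJ : ∃ S : Set (MvPolynomial (Fin e) k),
      (∀ p ∈ S, ∃ n, MvPolynomial.IsHomogeneous p n) ∧ J = Ideal.span S) : HomCl J := by
  obtain ⟨S, hS, rfl⟩ := hJ
  intro p hp
  induction hp using Submodule.span_induction with
  | mem s hs =>
    intro d
    obtain ⟨n, hn⟩ := hS s hs
    rw [homogeneousComponent_of_mem ((mem_homogeneousSubmodule n s).2 hn)]
    split
    · exact Ideal.subset_span hs
    · exact Ideal.zero_mem _
  | zero => intro d; simp only [map_zero]; exact Ideal.zero_mem _
  | add a b _ _ iha ihb => intro d; rw [map_add]; exact Ideal.add_mem _ (iha d) (ihb d)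
  | smul a p hp ihp =>
    intro d
    rw [smul_eq_mul]
    have hdecomp : a * p =
        ∑ b ∈ Finset.range (a.totalDegree + 1), ∑ c ∈ Finset.range (p.totalDegree + 1),
          homogeneousComponent b a * homogeneousComponent c p := by
      rw [← Finset.sum_mul_sum]
      rw [sum_comp (Nat.lt_succ_self _), sum_comp (Nat.lt_succ_self _)]
    rw [hdecomp, map_sum]
    refine Ideal.sum_mem _ (fun b _ => ?_)
    rw [map_sum]
    refine Ideal.sum_mem _ (fun c _ => ?_)
    have hh : homogeneousComponent b a * homogeneousComponent c p ∈
        homogeneousSubmodule (Fin e) k (b + c) :=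
      (mem_homogeneousSubmodule _ _).2
        (((mem_homogeneousSubmodule _ _).1 (homogeneousComponent_mem b a)).mul
          ((mem_homogeneousSubmodule _ _).1 (homogeneousComponent_mem c p)))
    rw [homogeneousComponent_of_mem hh]
    split
    · exact Ideal.mul_mem_left _ _ (ihp c)
    · exact Ideal.zero_mem _

lemma X_mul_homogeneousComponent (j : Fin e) (x : MvPolynomial (Fin e) k) (d : ℕ) :
    homogeneousComponent (d + 1) (X j * x) = X j * homogeneousComponent d x := by
  set M := x.totalDegree + 1 with hM
  have hx : X j * x = ∑ c ∈ Finset.range M, X j * homogeneousComponent c x := by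
    rw [← Finset.mul_sum, sum_comp (Nat.lt_succ_self _)]
  rw [hx, map_sum]
  have hterm : ∀ c, homogeneousComponent (d + 1) (X j * homogeneousComponent c x)
      = if c = d then X j * homogeneousComponent c x else 0 := by
    intro c
    have hh : X j * homogeneousComponent c x ∈ homogeneousSubmodule (Fin e) k (1 + c) :=
      (mem_homogeneousSubmodule _ _).2
        ((isHomogeneous_X k j).mul
          ((mem_homogeneousSubmodule _ _).1 (homogeneousComponent_mem c x)))
    rw [homogeneousComponent_of_mem hh]
    congr 1
    simp only [eq_iff_iff]
    omega
  simp_rw [hterm]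
  rw [Finset.sum_ite_eq' (Finset.range M) d]
  split
  · rfl
  · rename_i hd
    simp only [Finset.mem_range, not_lt] at hd
    rw [homogeneousComponent_eq_zero _ _ (by omega : x.totalDegree < d), mul_zero]

lemma q_constantCoeff {p : MvPolynomial (Fin e) k} (hp : p ∈ qIdeal k e) :
    constantCoeff p = 0 := by
  have : qIdeal k e ≤ RingHom.ker (constantCoeff (σ := Fin e) (R := k)) := by
    rw [qIdeal, Ideal.span_le]
    rintro _ ⟨j, rfl⟩
    simp [RingHom.mem_ker]
  simpa [RingHom.mem_ker] using this hp

lemma C_mem_q {c : k} (hc : (C c : MvPolynomial (Fin e) k) ∈ qIdeal k e) : c = 0 := by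
  simpa using q_constantCoeff hc

lemma sub_C_mem_q (p : MvPolynomial (Fin e) k) :
    p - C (constantCoeff p) ∈ qIdeal k e := by
  have : qIdeal k e = Ideal.span (X '' (Set.univ : Set (Fin e))) := by
    rw [qIdeal, Set.image_univ]
  rw [this, mem_ideal_span_X_image]
  intro m hm
  have hm0 : m ≠ 0 := by
    intro h
    subst h
    apply MvPolynomial.mem_support_iff.1 hm
    simp [MvPolynomial.coeff_sub, constantCoeff_eq]
  obtain ⟨i, hi⟩ := Finsupp.ne_iff.1 hm0
  exact ⟨i, Set.mem_univ i, by simpa using hi⟩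

lemma mem_colon_of_mul {I : Ideal (MvPolynomial (Fin e) k)} {z : MvPolynomial (Fin e) k}
    (hz : ∀ j, X j * z ∈ I) : z ∈ I.colon (qIdeal k e) := by
  rw [Submodule.mem_colon]
  intro p hp
  induction hp using Submodule.span_induction with
  | mem s hs =>
    obtain ⟨j, rfl⟩ := hs
    rw [smul_eq_mul, mul_comm]
    exact hz j
  | zero => simp
  | add a b _ _ iha ihb => rw [smul_add]; exact Ideal.add_mem _ iha ihb
  | smul a p _ ihp =>
    rw [smul_comm]
    rw [smul_eq_mul]
    exact Ideal.mul_mem_left _ _ ihp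

lemma mul_of_mem_colon {I : Ideal (MvPolynomial (Fin e) k)} {x p : MvPolynomial (Fin e) k}
    (hx : x ∈ I.colon (qIdeal k e)) (hp : p ∈ qIdeal k e) : p * x ∈ I := by
  rw [mul_comm, ← smul_eq_mul]
  exact Submodule.mem_colon.1 hx p hp

/-- extract a scalar: if `p` lies in `I ⊔ (x)` with `x` in the colon, then
`p ≡ c x mod I` for a scalar `c`. -/
lemma exists_scalar {I : Ideal (MvPolynomial (Fin e) k)} {x p : MvPolynomial (Fin e) k}
    (hx : x ∈ I.colon (qIdeal k e))
    (hp : p ∈ I ⊔ Ideal.span {x}) : ∃ c : k, p - C c * x ∈ I := by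
  obtain ⟨a, ha, b, hb, rfl⟩ := Submodule.mem_sup.1 hp
  obtain ⟨f, rfl⟩ := Ideal.mem_span_singleton'.1 hb
  refine ⟨constantCoeff f, ?_⟩
  have h1 : (f - C (constantCoeff f)) * x ∈ I :=
    mul_of_mem_colon hx (sub_C_mem_q f)
  have : a + f * x - C (constantCoeff f) * x = a + (f - C (constantCoeff f)) * x := by ring
  rw [this]
  exact Ideal.add_mem _ ha h1

/-- a homogeneous socle element of top degree σ -/
lemma socle_elem {I : Ideal (MvPolynomial (Fin e) k)} {σ' : ℕ}
    (hcl : HomCl I) (hnot : ¬ qIdeal k e ^ σ' ≤ I) (hpow : qIdeal k e ^ (σ' + 1) ≤ I) :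
    ∃ w : MvPolynomial (Fin e) k, w.IsHomogeneous σ' ∧ w ∉ I ∧ ∀ j, X j * w ∈ I := by
  obtain ⟨g, hg, hgI⟩ := SetLike.not_le_iff_exists.1 hnot
  set w := homogeneousComponent σ' g with hw
  have hwhom : w.IsHomogeneous σ' := homogeneousComponent_isHomogeneous σ' g
  have hwI : w ∉ I := by
    intro hwI
    apply hgI
    set M := max (g.totalDegree + 1) (σ' + 1) with hM
    have hgsum : ∑ d ∈ Finset.range M, homogeneousComponent d g = g :=
      sum_comp (by omega)
    rw [← hgsum]
    refine Ideal.sum_mem _ (fun d _ => ?_)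
    rcases lt_trichotomy d σ' with h | h | h
    · rw [homogeneousComponent_eq_zero_of_mem_pow hg h]
      exact Ideal.zero_mem _
    · rw [h, ← hw]; exact hwI
    · exact hpow (mem_pow_of_isHomogeneous (homogeneousComponent_isHomogeneous d g) (by omega))
  refine ⟨w, hwhom, hwI, fun j => ?_⟩
  exact hpow (mem_pow_of_isHomogeneous ((isHomogeneous_X k j).mul hwhom) (by omega))

/-- key classification: a homogeneous socle element of `I` of degree `d ≠ σ` lies in `I`,
when `Q/I` is Gorenstein with socle degree `σ`. -/
lemma socle_degree_classification {I : Ideal (MvPolynomial (Fin e) k)} {σ' : ℕ}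
    (hcl : HomCl I) (hgor : ∃ x, x ∉ I ∧ I.colon (qIdeal k e) = I ⊔ Ideal.span {x})
    (hnot : ¬ qIdeal k e ^ σ' ≤ I) (hpow : qIdeal k e ^ (σ' + 1) ≤ I)
    {d : ℕ} {z : MvPolynomial (Fin e) k}
    (hz : z.IsHomogeneous d) (hd : d ≠ σ') (hmul : ∀ j, X j * z ∈ I) : z ∈ I := by
  rcases lt_or_gt_of_ne hd with hlt | hgt
  · -- d < σ'
    by_contra hzI
    obtain ⟨w, hwhom, hwI, hwmul⟩ := socle_elem hcl hnot hpow
    obtain ⟨x, hxI, hcolon⟩ := hgor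
    have hxcolon : x ∈ I.colon (qIdeal k e) := by
      rw [hcolon]
      exact Submodule.mem_sup_right (Ideal.subset_span rfl)
    have hzc : z ∈ I ⊔ Ideal.span {x} := by rw [← hcolon]; exact mem_colon_of_mul hmul
    have hwc : w ∈ I ⊔ Ideal.span {x} := by rw [← hcolon]; exact mem_colon_of_mul hwmul
    obtain ⟨c, hc⟩ := exists_scalar hxcolon hzc
    obtain ⟨c', hc'⟩ := exists_scalar hxcolon hwc
    have hcne : c ≠ 0 := by
      rintro rfl
      apply hzI
      simpa using hc
    have hc'ne : c' ≠ 0 := by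
      rintro rfl
      apply hwI
      simpa using hc'
    have hv : C c' * z - C c * w ∈ I := by
      have : C c' * z - C c * w = C c' * (z - C c * x) - C c * (w - C c' * x) := by ring
      rw [this]
      exact Ideal.sub_mem _ (Ideal.mul_mem_left _ _ hc) (Ideal.mul_mem_left _ _ hc')
    have hcomp : homogeneousComponent d (C c' * z - C c * w) = C c' * z := by
      rw [map_sub, homogeneousComponent_C_mul, homogeneousComponent_C_mul]
      rw [homogeneousComponent_of_mem ((mem_homogeneousSubmodule _ _).2 hz)]
      rw [homogeneousComponent_of_mem ((mem_homogeneousSubmodule _ _).2 hwhom)]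
      rw [if_pos rfl, if_neg hd]
      ring
    have : C c' * z ∈ I := by
      rw [← hcomp]
      exact hcl _ hv d
    apply hzI
    have := Ideal.mul_mem_left _ (C c'⁻¹) this
    rwa [← mul_assoc, ← C_mul, inv_mul_cancel₀ hc'ne, C_1, one_mul] at this
  · -- σ' < d
    exact hpow (mem_pow_of_isHomogeneous hz (by omega))

end


section
variable {k : Type*} [Field k] {e : ℕ}

noncomputable instance degFintype (i : ℕ) :
    Fintype {u : Fin e →₀ ℕ // Finsupp.degree u = i} := by
  apply Fintype.ofEquiv (Sym (Fin e) i)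
  refine (Sym.equivNatSum (Fin e) i).trans (Equiv.subtypeEquiv (Equiv.refl _) ?_)
  intro u
  simp [Finsupp.sum, Finsupp.degree_apply]

lemma card_deg (he1 : 1 ≤ e) (i : ℕ) :
    Fintype.card {u : Fin e →₀ ℕ // Finsupp.degree u = i} = hQ e i := by
  have h1 : Fintype.card {u : Fin e →₀ ℕ // Finsupp.degree u = i}
      = Fintype.card (Sym (Fin e) i) := by
    apply Fintype.card_congr
    refine (Equiv.subtypeEquiv (Equiv.refl _) ?_).symm.trans (Sym.equivNatSum (Fin e) i).symm
    intro u
    simp [Finsupp.sum, Finsupp.degree_apply]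
  rw [h1, Sym.card_sym_eq_choose, Fintype.card_fin, hQ]
  have h2 : e + i - 1 = e - 1 + i := by omega
  have h4 := Nat.choose_symm (show e - 1 ≤ e - 1 + i by omega)
  rw [show e - 1 + i - (e - 1) = i by omega] at h4
  rw [h2, ← h4]

/-- the family of monomials of degree `i` -/
noncomputable def mono (i : ℕ) : {u : Fin e →₀ ℕ // Finsupp.degree u = i} →
    MvPolynomial (Fin e) k := fun u => monomial u.1 (1 : k)

lemma mono_li (i : ℕ) : LinearIndependent k (mono (k := k) (e := e) i) := by
  have hb := (MvPolynomial.basisMonomials (Fin e) k).linearIndependent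
  have : (mono (e := e) (k := k) i) =
      (MvPolynomial.basisMonomials (Fin e) k) ∘ (fun u => u.1) := by
    funext u
    simp [mono, MvPolynomial.coe_basisMonomials]
  rw [this]
  exact hb.comp _ Subtype.val_injective

lemma mono_mem_W (i : ℕ) (u : {u : Fin e →₀ ℕ // Finsupp.degree u = i}) :
    (mono i u : MvPolynomial (Fin e) k) ∈ homogeneousSubmodule (Fin e) k i :=
  (mem_homogeneousSubmodule _ _).2 (isHomogeneous_monomial _ u.2)

lemma W_eq_span (i : ℕ) :
    homogeneousSubmodule (Fin e) k i = Submodule.span k (Set.range (mono (k := k) (e := e) i)) := by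
  apply le_antisymm
  · intro p hp
    have hphom := (mem_homogeneousSubmodule _ _).1 hp
    rw [← MvPolynomial.support_sum_monomial_coeff p]
    refine Submodule.sum_mem _ (fun u hu => ?_)
    have hdeg : Finsupp.degree u = i := by
      by_contra hne
      exact (MvPolynomial.mem_support_iff.1 hu) (hphom.coeff_eq_zero hne)
    have : monomial u (MvPolynomial.coeff u p)
        = (MvPolynomial.coeff u p) • (mono i ⟨u, hdeg⟩ : MvPolynomial (Fin e) k) := by
      simp [mono, MvPolynomial.smul_monomial]
    rw [this]
    exact Submodule.smul_mem _ _ (Submodule.subset_span ⟨⟨u, hdeg⟩, rfl⟩)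
  · rw [Submodule.span_le]
    rintro _ ⟨u, rfl⟩
    exact mono_mem_W i u

instance W_fd (i : ℕ) : FiniteDimensional k (homogeneousSubmodule (Fin e) k i) := by
  rw [W_eq_span]
  exact FiniteDimensional.span_of_finite k (Set.finite_range _)

lemma finrank_W (he1 : 1 ≤ e) (i : ℕ) :
    Module.finrank k (homogeneousSubmodule (Fin e) k i) = hQ e i := by
  rw [W_eq_span, finrank_span_eq_card (mono_li i), card_deg he1]
set_option synthInstance.maxHeartbeats 1000000 in
set_option maxHeartbeats 1000000 in
lemma hilb_add (he1 : 1 ≤ e) {J : Ideal (MvPolynomial (Fin e) k)} (hJ : HomCl J) (i : ℕ) :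
    hilb k e J i + Module.finrank k
      ↥(homogeneousSubmodule (Fin e) k i ⊓ Submodule.restrictScalars k J) = hQ e i := by
  classical
  set W := homogeneousSubmodule (Fin e) k i with hWdef
  set Isup := qIdeal k e ^ (i + 1) ⊔ J with hIsup
  let φ : W →ₗ[k] (MvPolynomial (Fin e) k ⧸ Isup) :=
    (Ideal.Quotient.mkₐ k Isup).toLinearMap.comp W.subtype
  have hφ : ∀ w : W, φ w = Ideal.Quotient.mk Isup (w : MvPolynomial (Fin e) k) :=
    fun w => rfl
  have hrange : LinearMap.range φ =
      (Ideal.map (Ideal.Quotient.mk Isup) (qIdeal k e ^ i ⊔ J)).restrictScalars k := by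
    apply le_antisymm
    · rintro _ ⟨w, rfl⟩
      rw [hφ]
      exact Ideal.mem_map_of_mem (Ideal.Quotient.mk Isup) (Ideal.mem_sup_left
        (mem_pow_of_isHomogeneous ((mem_homogeneousSubmodule _ _).1 w.2) le_rfl))
    · intro x hx
      obtain ⟨p, hp, rfl⟩ :=
        (Ideal.mem_map_iff_of_surjective _ Ideal.Quotient.mk_surjective).1 hx
      obtain ⟨a, ha, f, hf, rfl⟩ := Submodule.mem_sup.1 hp
      set M := max (a.totalDegree + 1) (i + 1) with hM
      have hsum : ∑ d ∈ Finset.range M, homogeneousComponent d a = a := sum_comp (by omega)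
      have hi_mem : i ∈ Finset.range M := by
        simp only [Finset.mem_range, hM]; omega
      have herase := Finset.sum_erase_add (Finset.range M)
        (fun d => homogeneousComponent d a) hi_mem
      rw [hsum] at herase
      have hrest : a - homogeneousComponent i a ∈ qIdeal k e ^ (i + 1) := by
        have heq : a - homogeneousComponent i a
            = ∑ d ∈ (Finset.range M).erase i, homogeneousComponent d a :=
          (eq_sub_of_add_eq herase).symm
        rw [heq]
        refine Ideal.sum_mem _ (fun d hd => ?_)
        have hdi : d ≠ i := (Finset.mem_erase.1 hd).1
        rcases lt_or_gt_of_ne hdi with h | h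
        · rw [homogeneousComponent_eq_zero_of_mem_pow ha (by omega)]
          exact Ideal.zero_mem _
        · exact mem_pow_of_isHomogeneous (homogeneousComponent_isHomogeneous d a) (by omega)
      refine ⟨⟨homogeneousComponent i a, homogeneousComponent_mem i a⟩, ?_⟩
      rw [hφ]
      rw [Ideal.Quotient.mk_eq_mk_iff_sub_mem]
      have heq2 : homogeneousComponent i a - (a + f)
          = -((a - homogeneousComponent i a) + f) := by ring
      rw [heq2]
      exact neg_mem (Ideal.add_mem _ (Ideal.mem_sup_left hrest)
        (Ideal.mem_sup_right hf))
  have hker : LinearMap.ker φ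
      = Submodule.comap W.subtype (Submodule.restrictScalars k J) := by
    ext w
    simp only [LinearMap.mem_ker, Submodule.mem_comap, Submodule.subtype_apply,
      Submodule.restrictScalars_mem]
    rw [hφ w, Ideal.Quotient.eq_zero_iff_mem]
    constructor
    · intro hw
      obtain ⟨aa, haa, ff, hff, hsum2⟩ := Submodule.mem_sup.1 hw
      have h1 : homogeneousComponent i (w : MvPolynomial (Fin e) k) = w := by
        rw [homogeneousComponent_of_mem w.2, if_pos rfl]
      rw [← h1, ← hsum2, map_add,
        homogeneousComponent_eq_zero_of_mem_pow haa (by omega), zero_add]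
      exact hJ _ hff i
    · intro hw
      exact Ideal.mem_sup_right hw
  have hker2 : Module.finrank k (LinearMap.ker φ)
      = Module.finrank k ↥(W ⊓ Submodule.restrictScalars k J) := by
    rw [hker]
    have hcomap : Submodule.comap W.subtype (Submodule.restrictScalars k J)
        = Submodule.comap W.subtype (W ⊓ Submodule.restrictScalars k J) := by
      ext w
      simp only [Submodule.mem_comap, Submodule.mem_inf, Submodule.restrictScalars_mem]
      exact ⟨fun h => ⟨w.2, h⟩, fun h => h.2⟩
    rw [hcomap]
    exact (Submodule.comapSubtypeEquivOfLe inf_le_left).finrank_eq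
  have hfin := LinearMap.finrank_range_add_finrank_ker φ
  rw [hrange, hker2, finrank_W he1] at hfin
  exact hfin

lemma fd_WJ {J : Ideal (MvPolynomial (Fin e) k)} (i : ℕ) :
    FiniteDimensional k ↥(homogeneousSubmodule (Fin e) k i ⊓ Submodule.restrictScalars k J) :=
  Submodule.finiteDimensional_of_le inf_le_left

lemma hQ_pos (i : ℕ) : 0 < hQ e i := Nat.choose_pos (Nat.le_add_right _ _)

lemma hilb_le_hQ (he1 : 1 ≤ e) {J : Ideal (MvPolynomial (Fin e) k)} (hJ : HomCl J) (i : ℕ) :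
    hilb k e J i ≤ hQ e i := by
  have := hilb_add he1 hJ i; omega

/-- N2 : below the initial degree, the Hilbert function is that of Q. -/
lemma hilb_eq_hQ (he1 : 1 ≤ e) {J : Ideal (MvPolynomial (Fin e) k)} (hJ : HomCl J) (i : ℕ)
    (hle : J ≤ qIdeal k e ^ (i + 1)) : hilb k e J i = hQ e i := by
  have h := hilb_add he1 hJ i
  have hbot : homogeneousSubmodule (Fin e) k i ⊓ Submodule.restrictScalars k J = ⊥ := by
    rw [Submodule.eq_bot_iff]
    rintro p ⟨hp1, hp2⟩
    have := homogeneousComponent_eq_zero_of_mem_pow (hle hp2) (Nat.lt_succ_self i)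
    rwa [homogeneousComponent_of_mem hp1, if_pos rfl] at this
  rw [hbot] at h
  simpa using h

/-- N3 : a nonzero homogeneous element of degree i in J makes the Hilbert function drop. -/
lemma hilb_lt_hQ (he1 : 1 ≤ e) {J : Ideal (MvPolynomial (Fin e) k)} (hJ : HomCl J) {i : ℕ}
    {f : MvPolynomial (Fin e) k} (hf : f.IsHomogeneous i) (hf0 : f ≠ 0) (hfJ : f ∈ J) :
    hilb k e J i < hQ e i := by
  have h := hilb_add he1 hJ i
  have : 0 < Module.finrank k
      ↥(homogeneousSubmodule (Fin e) k i ⊓ Submodule.restrictScalars k J) := by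
    haveI := fd_WJ (k := k) (e := e) (J := J) i
    rcases Nat.eq_zero_or_pos (Module.finrank k
      ↥(homogeneousSubmodule (Fin e) k i ⊓ Submodule.restrictScalars k J)) with h0 | h0
    · exfalso
      rw [Submodule.finrank_eq_zero] at h0
      have : f ∈ (⊥ : Submodule k (MvPolynomial (Fin e) k)) := by
        rw [← h0]
        exact ⟨(mem_homogeneousSubmodule _ _).2 hf, hfJ⟩
      exact hf0 (by simpa using this)
    · exact h0
  omega

/-- N1 : subadditivity of the Hilbert function under intersections. -/
lemma hilb_inf_le (he1 : 1 ≤ e) {I1 I2 : Ideal (MvPolynomial (Fin e) k)}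
    (h1 : HomCl I1) (h2 : HomCl I2) (i : ℕ) :
    hilb k e (I1 ⊓ I2) i ≤ hilb k e I1 i + hilb k e I2 i := by
  have h12 : HomCl (I1 ⊓ I2) := fun p hp d => ⟨h1 p hp.1 d, h2 p hp.2 d⟩
  have e0 := hilb_add he1 h12 i
  have e1 := hilb_add he1 h1 i
  have e2 := hilb_add he1 h2 i
  set W := homogeneousSubmodule (Fin e) k i with hW
  set A := W ⊓ Submodule.restrictScalars k I1 with hA
  set B := W ⊓ Submodule.restrictScalars k I2 with hB
  haveI : FiniteDimensional k A := fd_WJ i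
  haveI : FiniteDimensional k B := fd_WJ i
  have hAB : W ⊓ Submodule.restrictScalars k (I1 ⊓ I2) = A ⊓ B := by
    rw [hA, hB]
    ext p
    simp only [Submodule.mem_inf, Submodule.restrictScalars_mem, Ideal.mem_inf]
    tauto
  rw [hAB] at e0
  have e4 := Submodule.finrank_sup_add_finrank_inf_eq A B
  have e5 : Module.finrank k ↥(A ⊔ B) ≤ hQ e i := by
    rw [← finrank_W (k := k) he1 i]
    exact Submodule.finrank_mono (sup_le inf_le_left inf_le_left)
  omega

/-- N4 : if `J ≤ I` and the Hilbert functions agree in degree `i`, then the degree-`i`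
homogeneous parts agree. -/
lemma homog_part_eq (he1 : 1 ≤ e) {J I : Ideal (MvPolynomial (Fin e) k)}
    (hJ : HomCl J) (hI : HomCl I) (hle : J ≤ I) (i : ℕ)
    (heq : hilb k e J i = hilb k e I i) {z : MvPolynomial (Fin e) k}
    (hz : z.IsHomogeneous i) (hzI : z ∈ I) : z ∈ J := by
  have e0 := hilb_add he1 hJ i
  have e1 := hilb_add he1 hI i
  set W := homogeneousSubmodule (Fin e) k i with hW
  haveI : FiniteDimensional k ↥(W ⊓ Submodule.restrictScalars k I) := fd_WJ i
  have hsub : W ⊓ Submodule.restrictScalars k J ≤ W ⊓ Submodule.restrictScalars k I :=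
    inf_le_inf_left _ (fun p hp => hle hp)
  have hfr : Module.finrank k ↥(W ⊓ Submodule.restrictScalars k I)
      ≤ Module.finrank k ↥(W ⊓ Submodule.restrictScalars k J) := by omega
  have := Submodule.eq_of_le_of_finrank_le hsub hfr
  have hmem : z ∈ W ⊓ Submodule.restrictScalars k I :=
    ⟨(mem_homogeneousSubmodule _ _).2 hz, hzI⟩
  rw [← this] at hmem
  exact hmem.2

lemma hQat_zero_of_lt {σ i : ℕ} (h : σ < i) : hQat e σ i = 0 := if_neg (by omega)

lemma hQat_self (σ : ℕ) : hQat e σ σ = 1 := by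
  rw [hQat, if_pos le_rfl, Nat.sub_self, hQ, Nat.add_zero, Nat.choose_self]

lemma hQat_mono_left {σ σ' i : ℕ} (h : σ ≤ σ') : hQat e σ i ≤ hQat e σ' i := by
  unfold hQat
  split
  · rw [if_pos (by omega)]
    exact Nat.choose_le_choose _ (by omega)
  · exact Nat.zero_le _
end


/-- In the setup of two homogeneous `q`-primary ideals with
compressed Gorenstein quotients `R1, R2` of socle degrees `s1 ≤ s2` in `e ≥ 3`
variables, if `R = Q/(I1 ∩ I2)` is compressed of type 2 with socle degree `s`
and initial degree `t`, then `h_R(i) = min{h_Q(i), h_{R1}(i) + h_{R2}(i)}` for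
all `i`, and `t = min{ i : h_Q(i) > h_{R1}(i) + h_{R2}(i) }`. -/
theorem stmt11 (k : Type*) [Field k] (e : ℕ) (he : 3 ≤ e)
    (I1 I2 : Ideal (MvPolynomial (Fin e) k))
    (h1hom : IsHomogeneousIdeal k e I1) (h2hom : IsHomogeneousIdeal k e I2)
    (h1p : I1.IsPrimary) (h1r : I1.radical = qIdeal k e)
    (h2p : I2.IsPrimary) (h2r : I2.radical = qIdeal k e)
    (h1q2 : I1 ≤ qIdeal k e ^ 2) (h2q2 : I2 ≤ qIdeal k e ^ 2)
    (h1gor : HasTypeOne k e I1) (h2gor : HasTypeOne k e I2)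
    (s1 s2 s t : ℕ)
    (hs1 : SocDeg k e I1 s1) (hs2 : SocDeg k e I2 s2) (hle : s1 ≤ s2)
    (h1c : CompressedGor k e I1 s1) (h2c : CompressedGor k e I2 s2)
    (htype2 : HasTypeTwo k e (I1 ⊓ I2))
    (hs : SocDeg k e (I1 ⊓ I2) s)
    (ht : IniDeg k e (I1 ⊓ I2) t)
    -- `R` is compressed: for the socle polynomial `χ^b + χ^s` of `R`
    (hcomp : ∃ b ≤ s, ∀ i,
      hilb k e (I1 ⊓ I2) i = min (hQ e i) (hQat e b i + hQat e s i)) :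
    (∀ i, hilb k e (I1 ⊓ I2) i = min (hQ e i) (hilb k e I1 i + hilb k e I2 i)) ∧
    t = sInf {i : ℕ | hilb k e I1 i + hilb k e I2 i < hQ e i} := by
  classical
  classical
  have he1 : 1 ≤ e := by omega
  have hcl1 : HomCl I1 := isHomogeneousIdeal_homCl h1hom
  have hcl2 : HomCl I2 := isHomogeneousIdeal_homCl h2hom
  have hclJ : HomCl (I1 ⊓ I2) := fun p hp d => ⟨hcl1 p hp.1 d, hcl2 p hp.2 d⟩
  -- the top socle degree of R is s2
  have hq21 : qIdeal k e ^ (s2 + 1) ≤ I1 ⊓ I2 :=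
    le_inf (le_trans (Ideal.pow_le_pow_right (by omega)) hs1.2) hs2.2
  obtain rfl : s = s2 := by
    by_contra hne
    rcases lt_or_gt_of_ne hne with h | h
    · exact hs2.1 (le_trans (le_trans (Ideal.pow_le_pow_right (by omega)) hs.2) inf_le_right)
    · exact hs.1 (le_trans (Ideal.pow_le_pow_right (by omega)) hq21)
  obtain ⟨b, hbs, hbf⟩ := hcomp
  rcases le_or_gt s1 b with hb1 | hb1
  · -- the socle degrees match : conclude directly
    have part1 : ∀ i,
        hilb k e (I1 ⊓ I2) i = min (hQ e i) (hilb k e I1 i + hilb k e I2 i) := by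
      intro i
      have hN1 := hilb_inf_le he1 hcl1 hcl2 i
      have h1i := h1c i
      have h2i := h2c i
      have hfi := hbf i
      have hm1 : hQat e s1 i ≤ hQat e b i := hQat_mono_left hb1
      have hm2 : hQat e b i ≤ hQat e s i := hQat_mono_left hbs
      omega
    refine ⟨part1, ?_⟩
    -- part 2 : the initial degree
    obtain ⟨f, hfJ, hft⟩ := SetLike.not_le_iff_exists.1 ht.2
    have hgJ : homogeneousComponent t f ∈ I1 ⊓ I2 := hclJ f hfJ t
    have hgq : homogeneousComponent t f ∉ qIdeal k e ^ (t + 1) := by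
      intro hgq
      apply hft
      have hsum : ∑ d ∈ Finset.range (max (f.totalDegree + 1) (t + 1)),
          homogeneousComponent d f = f := sum_comp (by omega)
      rw [← hsum]
      refine Ideal.sum_mem _ (fun d _ => ?_)
      rcases lt_trichotomy d t with h | h | h
      · rw [homogeneousComponent_eq_zero_of_mem_pow (ht.1 hfJ) h]
        exact Ideal.zero_mem _
      · rw [h]; exact hgq
      · exact mem_pow_of_isHomogeneous (homogeneousComponent_isHomogeneous d f) (by omega)
    have hg0 : homogeneousComponent t f ≠ 0 := by
      intro h0; rw [h0] at hgq; exact hgq (Ideal.zero_mem _)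
    have hlt := hilb_lt_hQ he1 hclJ (homogeneousComponent_isHomogeneous t f) hg0 hgJ
    have htT : hilb k e I1 t + hilb k e I2 t < hQ e t := by
      have := part1 t; omega
    have hnotT : ∀ i, i < t → ¬ (hilb k e I1 i + hilb k e I2 i < hQ e i) := by
      intro i hit
      have hth : hilb k e (I1 ⊓ I2) i = hQ e i :=
        hilb_eq_hQ he1 hclJ i (le_trans ht.1 (Ideal.pow_le_pow_right (by omega)))
      have hp1 := part1 i
      omega
    exact le_antisymm
      (le_csInf ⟨t, htT⟩ fun i hi => not_lt.1 fun hlt' => hnotT i hlt' hi)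
      (Nat.sInf_le htT)
  · -- b < s1 : impossible
    exfalso
    obtain ⟨x, y, hcol, hind⟩ := htype2
    have hone : (1 : MvPolynomial (Fin e) k) ∉ qIdeal k e := by
      intro h; simpa using q_constantCoeff h
    have hxq : ∀ j, X j * x ∈ I1 ⊓ I2 := fun j =>
      mul_of_mem_colon (by
        rw [hcol]
        exact Submodule.mem_sup_right (Ideal.subset_span (Set.mem_insert _ _)))
        (X_mem_q j)
    have hyq : ∀ j, X j * y ∈ I1 ⊓ I2 := fun j =>
      mul_of_mem_colon (by
        rw [hcol]
        exact Submodule.mem_sup_right (Ideal.subset_span (Set.mem_insert_of_mem _ rfl)))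
        (X_mem_q j)
    have hxcomp : ∀ d j, X j * homogeneousComponent d x ∈ I1 ⊓ I2 := fun d j => by
      rw [← X_mul_homogeneousComponent]; exact hclJ _ (hxq j) (d + 1)
    have hycomp : ∀ d j, X j * homogeneousComponent d y ∈ I1 ⊓ I2 := fun d j => by
      rw [← X_mul_homogeneousComponent]; exact hclJ _ (hyq j) (d + 1)
    have hCL1 : ∀ d (z : MvPolynomial (Fin e) k), z.IsHomogeneous d → d ≠ s1 →
        (∀ j, X j * z ∈ I1) → z ∈ I1 := fun d z hz hd hm =>
      socle_degree_classification hcl1 h1gor hs1.1 hs1.2 hz hd hm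
    have hCL2 : ∀ d (z : MvPolynomial (Fin e) k), z.IsHomogeneous d → d ≠ s →
        (∀ j, X j * z ∈ I2) → z ∈ I2 := fun d z hz hd hm =>
      socle_degree_classification hcl2 h2gor hs2.1 hs2.2 hz hd hm
    have key : ∀ p : MvPolynomial (Fin e) k,
        (∀ d j, X j * homogeneousComponent d p ∈ I1 ⊓ I2) →
        p - ∑ d ∈ ({s1, s} : Finset ℕ), homogeneousComponent d p ∈ I1 ⊓ I2 := by
      intro p hp
      have hsub : ({s1, s} : Finset ℕ) ⊆ Finset.range (max (p.totalDegree + 1) (max s1 s + 1)) := by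
        intro d hd
        simp only [Finset.mem_insert, Finset.mem_singleton] at hd
        simp only [Finset.mem_range]
        omega
      have hsdiff := Finset.sum_sdiff (f := fun d => homogeneousComponent d p) hsub
      have hsum : ∑ d ∈ Finset.range (max (p.totalDegree + 1) (max s1 s + 1)),
          homogeneousComponent d p = p := sum_comp (by omega)
      rw [hsum] at hsdiff
      have heq : p - ∑ d ∈ ({s1, s} : Finset ℕ), homogeneousComponent d p
          = ∑ d ∈ Finset.range (max (p.totalDegree + 1) (max s1 s + 1)) \ {s1, s},
              homogeneousComponent d p := (eq_sub_of_add_eq hsdiff).symm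
      rw [heq]
      refine Submodule.sum_mem _ (fun d hd => ?_)
      have hd12 : d ≠ s1 ∧ d ≠ s := by
        have := (Finset.mem_sdiff.1 hd).2
        simp only [Finset.mem_insert, Finset.mem_singleton] at this
        tauto
      exact ⟨hCL1 d _ (homogeneousComponent_isHomogeneous d p) hd12.1 (fun j => (hp d j).1),
        hCL2 d _ (homogeneousComponent_isHomogeneous d p) hd12.2 (fun j => (hp d j).2)⟩
    rcases eq_or_lt_of_le hle with heq12 | hlt12
    · -- s1 = s : two independent socle elements in degree s1
      subst heq12
      have hpair : ({s1, s1} : Finset ℕ) = {s1} := by simp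
      have hx' : x - homogeneousComponent s1 x ∈ I1 ⊓ I2 := by
        have := key x hxcomp
        rwa [hpair, Finset.sum_singleton] at this
      have hy' : y - homogeneousComponent s1 y ∈ I1 ⊓ I2 := by
        have := key y hycomp
        rwa [hpair, Finset.sum_singleton] at this
      have hindep : ∀ c c' : k,
          C c * homogeneousComponent s1 x + C c' * homogeneousComponent s1 y ∈ I1 ⊓ I2 →
          c = 0 ∧ c' = 0 := by
        intro c c' h
        have hxy : C c * x + C c' * y ∈ I1 ⊓ I2 := by
          have hrw : C c * x + C c' * y
              = (C c * homogeneousComponent s1 x + C c' * homogeneousComponent s1 y)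
                + (C c * (x - homogeneousComponent s1 x)
                  + C c' * (y - homogeneousComponent s1 y)) := by ring
          rw [hrw]
          exact Ideal.add_mem _ h (Ideal.add_mem _ (Ideal.mul_mem_left _ _ hx')
            (Ideal.mul_mem_left _ _ hy'))
        obtain ⟨hc, hc'⟩ := hind _ _ hxy
        exact ⟨C_mem_q hc, C_mem_q hc'⟩
      set v : Fin 2 → MvPolynomial (Fin e) k :=
        ![homogeneousComponent s1 x, homogeneousComponent s1 y] with hv
      have hli : LinearIndependent k v := by
        rw [hv]
        rw [LinearIndependent.pair_iff]
        intro cc cc' hcc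
        have : C cc * homogeneousComponent s1 x + C cc' * homogeneousComponent s1 y
            ∈ I1 ⊓ I2 := by
          rw [← MvPolynomial.smul_eq_C_mul, ← MvPolynomial.smul_eq_C_mul, hcc]
          exact Ideal.zero_mem _
        exact hindep cc cc' this
      set P := Submodule.span k (Set.range v) with hP
      have hPfr : Module.finrank k P = 2 := by
        rw [hP, finrank_span_eq_card hli]; simp
      haveI : FiniteDimensional k P := by
        rw [hP]; exact FiniteDimensional.span_of_finite k (Set.finite_range v)
      set W := homogeneousSubmodule (Fin e) k s1 with hW
      set WJ := W ⊓ Submodule.restrictScalars k (I1 ⊓ I2) with hWJ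
      haveI : FiniteDimensional k WJ := fd_WJ s1
      have hPW : P ≤ W := by
        rw [hP, Submodule.span_le]
        rintro _ ⟨i, rfl⟩
        fin_cases i
        · exact homogeneousComponent_mem s1 x
        · exact homogeneousComponent_mem s1 y
      have hPJ : P ⊓ WJ = ⊥ := by
        rw [Submodule.eq_bot_iff]
        rintro z ⟨hzP, _, hzJ⟩
        obtain ⟨c, hc⟩ := (Submodule.mem_span_range_iff_exists_fun k).1 hzP
        have hz2 : C (c 0) * homogeneousComponent s1 x
            + C (c 1) * homogeneousComponent s1 y ∈ I1 ⊓ I2 := by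
          have : C (c 0) * homogeneousComponent s1 x + C (c 1) * homogeneousComponent s1 y
              = z := by
            rw [← hc, hv]
            simp [Fin.sum_univ_two, MvPolynomial.smul_eq_C_mul]
          rwa [this]
        obtain ⟨h0, h1⟩ := hindep _ _ hz2
        rw [← hc, hv]
        simp [Fin.sum_univ_two, h0, h1]
      have hsupfr := Submodule.finrank_sup_add_finrank_inf_eq P WJ
      rw [hPJ] at hsupfr
      have hsuple : Module.finrank k ↥(P ⊔ WJ) ≤ hQ e s1 := by
        rw [← finrank_W (k := k) he1 s1]
        exact Submodule.finrank_mono (sup_le hPW inf_le_left)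
      have hha := hilb_add he1 hclJ s1
      have hval : hilb k e (I1 ⊓ I2) s1 = 1 := by
        have := hbf s1
        rw [hQat_zero_of_lt hb1, hQat_self] at this
        have hpos := hQ_pos (e := e) s1
        omega
      rw [← hWJ] at hha
      rw [finrank_bot] at hsupfr
      omega
    · -- s1 < s
      have hxs1I2 : homogeneousComponent s1 x ∈ I2 :=
        hCL2 s1 _ (homogeneousComponent_isHomogeneous s1 x) (by omega)
          (fun j => (hxcomp s1 j).2)
      have hys1I2 : homogeneousComponent s1 y ∈ I2 :=
        hCL2 s1 _ (homogeneousComponent_isHomogeneous s1 y) (by omega)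
          (fun j => (hycomp s1 j).2)
      have hilbeq : hilb k e (I1 ⊓ I2) s1 = hilb k e I2 s1 := by
        have h1 := hbf s1
        have h2 := h2c s1
        rw [hQat_zero_of_lt hb1] at h1
        omega
      have hxs1J : homogeneousComponent s1 x ∈ I1 ⊓ I2 :=
        homog_part_eq he1 hclJ hcl2 inf_le_right s1 hilbeq
          (homogeneousComponent_isHomogeneous s1 x) hxs1I2
      have hys1J : homogeneousComponent s1 y ∈ I1 ⊓ I2 :=
        homog_part_eq he1 hclJ hcl2 inf_le_right s1 hilbeq
          (homogeneousComponent_isHomogeneous s1 y) hys1I2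
      have hpair : ∀ p : MvPolynomial (Fin e) k,
          ∑ d ∈ ({s1, s} : Finset ℕ), homogeneousComponent d p
          = homogeneousComponent s1 p + homogeneousComponent s p := fun p =>
        Finset.sum_pair (by omega)
      have hx' : x - homogeneousComponent s x ∈ I1 ⊓ I2 := by
        have h0 := key x hxcomp
        rw [hpair] at h0
        have : x - homogeneousComponent s x
            = (x - (homogeneousComponent s1 x + homogeneousComponent s x))
              + homogeneousComponent s1 x := by ring
        rw [this]
        exact Ideal.add_mem _ h0 hxs1J
      have hy' : y - homogeneousComponent s y ∈ I1 ⊓ I2 := by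
        have h0 := key y hycomp
        rw [hpair] at h0
        have : y - homogeneousComponent s y
            = (y - (homogeneousComponent s1 y + homogeneousComponent s y))
              + homogeneousComponent s1 y := by ring
        rw [this]
        exact Ideal.add_mem _ h0 hys1J
      have hxs2I1 : homogeneousComponent s x ∈ I1 :=
        hCL1 s _ (homogeneousComponent_isHomogeneous s x) (by omega)
          (fun j => (hxcomp s j).1)
      have hys2I1 : homogeneousComponent s y ∈ I1 :=
        hCL1 s _ (homogeneousComponent_isHomogeneous s y) (by omega)
          (fun j => (hycomp s j).1)
      obtain ⟨x2, hx2I, hcol2⟩ := h2gor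
      have hx2col : x2 ∈ I2.colon (qIdeal k e) := by
        rw [hcol2]
        exact Submodule.mem_sup_right (Ideal.subset_span rfl)
      have hxs2col : homogeneousComponent s x ∈ I2 ⊔ Ideal.span {x2} := by
        rw [← hcol2]
        exact mem_colon_of_mul (fun j => (hxcomp s j).2)
      have hys2col : homogeneousComponent s y ∈ I2 ⊔ Ideal.span {x2} := by
        rw [← hcol2]
        exact mem_colon_of_mul (fun j => (hycomp s j).2)
      obtain ⟨c, hc⟩ := exists_scalar hx2col hxs2col
      obtain ⟨c', hc'⟩ := exists_scalar hx2col hys2col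
      have hv2 : C c' * homogeneousComponent s x - C c * homogeneousComponent s y ∈ I2 := by
        have hrw : C c' * homogeneousComponent s x - C c * homogeneousComponent s y
            = C c' * (homogeneousComponent s x - C c * x2)
              - C c * (homogeneousComponent s y - C c' * x2) := by ring
        rw [hrw]
        exact Ideal.sub_mem _ (Ideal.mul_mem_left _ _ hc) (Ideal.mul_mem_left _ _ hc')
      have hvJ : C c' * homogeneousComponent s x - C c * homogeneousComponent s y
          ∈ I1 ⊓ I2 :=
        ⟨Ideal.sub_mem _ (Ideal.mul_mem_left _ _ hxs2I1) (Ideal.mul_mem_left _ _ hys2I1), hv2⟩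
      have hxyJ : C c' * x + (- C c) * y ∈ I1 ⊓ I2 := by
        have hrw : C c' * x + (- C c) * y
            = (C c' * homogeneousComponent s x - C c * homogeneousComponent s y)
              + (C c' * (x - homogeneousComponent s x)
                - C c * (y - homogeneousComponent s y)) := by ring
        rw [hrw]
        exact Ideal.add_mem _ hvJ (Ideal.sub_mem _ (Ideal.mul_mem_left _ _ hx')
          (Ideal.mul_mem_left _ _ hy'))
      obtain ⟨hcq', hcq⟩ := hind _ _ hxyJ
      have hc0 : c = 0 := by
        have : (C c : MvPolynomial (Fin e) k) ∈ qIdeal k e := by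
          have := neg_mem_iff.2 hcq
          simpa using this
        exact C_mem_q this
      have hxs2I2 : homogeneousComponent s x ∈ I2 := by
        rw [hc0] at hc
        simpa using hc
      have hxJ : x ∈ I1 ⊓ I2 := by
        have : x = (x - homogeneousComponent s x) + homogeneousComponent s x := by ring
        rw [this]
        exact Ideal.add_mem _ hx' ⟨hxs2I1, hxs2I2⟩
      have h1q : (1 : MvPolynomial (Fin e) k) ∈ qIdeal k e := by
        have h10 : (1 : MvPolynomial (Fin e) k) * x + 0 * y ∈ I1 ⊓ I2 := by
          simpa using hxJ
        exact (hind _ _ h10).1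
      exact hone h1q
end

section
/- In the setup of two homogeneous compressed Gorenstein ideals I1, I2 in the power series ring in e ≥ 3 variables with R = Q/(I1 ∩ I2) compressed of type 2, the socle polynomial of R is χ^{s1} + χ^{s}, and a = min{ i ≥ 0 : q^i I2 ⊆ I1 } equals s1 − t2 + 1, where s1 is the socle degree of R1 = Q/I1, s is the socle degree of R, and t2 is the initial degree of I2. -/
open MvPolynomial

namespace Aux
variable {k : Type*} [Field k] {e : ℕ}

theorem degree_add (a b : Fin e →₀ ℕ) : (a + b).degree = a.degree + b.degree := by
  simp [Finsupp.degree_eq_weight_one, map_add]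

theorem degree_single (i : Fin e) (n : ℕ) : (Finsupp.single i n).degree = n := by
  by_cases hn : n = 0
  · simp [hn]
  · simp [Finsupp.degree_apply, Finsupp.support_single_ne_zero i hn]

/-- The ideal of polynomials whose coefficients vanish in degrees `< m`. -/
def lowZero (k : Type*) [Field k] (e m : ℕ) : Ideal (MvPolynomial (Fin e) k) where
  carrier := {p | ∀ d : Fin e →₀ ℕ, d.degree < m → coeff d p = 0}
  add_mem' := by
    intro a b ha hb d hd
    rw [coeff_add, ha d hd, hb d hd, add_zero]
  zero_mem' := by intro d hd; rw [coeff_zero]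
  smul_mem' := by
    intro c p hp d hd
    rw [smul_eq_mul, coeff_mul]
    apply Finset.sum_eq_zero
    rintro ⟨u, v⟩ huv
    rw [Finset.HasAntidiagonal.mem_antidiagonal] at huv
    have hv : v.degree ≤ d.degree := by
      have h2 : (u + v).degree = u.degree + v.degree := degree_add u v
      rw [huv] at h2; omega
    exact mul_eq_zero_of_right _ (hp v (lt_of_le_of_lt hv hd))


theorem q_le_lowZero_one : qIdeal k e ≤ lowZero k e 1 := by
  rw [qIdeal, Ideal.span_le]
  rintro _ ⟨i, rfl⟩
  intro d hd
  have hd0 : d = 0 := by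
    rw [← Finsupp.degree_eq_zero_iff]; omega
  rw [hd0]
  exact coeff_zero_X i

theorem qpow_le_lowZero (m : ℕ) : qIdeal k e ^ m ≤ lowZero k e m := by
  induction m with
  | zero => intro x _ d hd; exact absurd hd (by omega)
  | succ m ih =>
      rw [pow_succ]
      refine Ideal.mul_le.2 fun a ha b hb => ?_
      intro d hd
      rw [coeff_mul]
      apply Finset.sum_eq_zero
      rintro ⟨u, v⟩ huv
      rw [Finset.HasAntidiagonal.mem_antidiagonal] at huv
      have hsum : u.degree + v.degree = d.degree := by
        rw [← degree_add, huv]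
      by_cases hu : u.degree < m
      · exact mul_eq_zero_of_left (ih ha u hu) _
      · have hv0 : v = 0 := by
          rw [← Finsupp.degree_eq_zero_iff]; omega
        have : coeff v b = 0 := by
          rw [hv0]
          exact q_le_lowZero_one hb 0 (by simp [map_zero])
        exact mul_eq_zero_of_right _ this

theorem monomial_mem_qpow {m : ℕ} (d : Fin e →₀ ℕ) (c : k) (h : m ≤ d.degree) :
    monomial d c ∈ qIdeal k e ^ m := by
  induction m generalizing d with
  | zero => simp
  | succ m ih =>
      have hd0 : d ≠ 0 := by
        intro h0; rw [h0, map_zero] at h; omega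
      obtain ⟨i, hi⟩ : ∃ i, d i ≠ 0 := by
        by_contra hc; push_neg at hc
        exact hd0 (Finsupp.ext fun i => hc i)
      have hle : Finsupp.single i 1 ≤ d := by
        rw [Finsupp.single_le_iff]; omega
      have hdd : (d - Finsupp.single i 1) + Finsupp.single i 1 = d :=
        tsub_add_cancel_of_le hle
      have hdeg : (d - Finsupp.single i 1).degree + 1 = d.degree := by
        have h2 := degree_add (d - Finsupp.single i 1) (Finsupp.single i 1)
        rw [hdd, degree_single] at h2
        omega
      have hmon : monomial d c = monomial (d - Finsupp.single i 1) c * X i := by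
        rw [X, monomial_mul, mul_one, hdd]
      rw [hmon, pow_succ]
      exact Ideal.mul_mem_mul (ih _ (by omega)) (Ideal.subset_span ⟨i, rfl⟩)

theorem mem_qpow_iff {m : ℕ} {p : MvPolynomial (Fin e) k} :
    p ∈ qIdeal k e ^ m ↔ ∀ d : Fin e →₀ ℕ, d.degree < m → coeff d p = 0 := by
  constructor
  · exact fun hp => qpow_le_lowZero m hp
  · intro h
    rw [← support_sum_monomial_coeff p]
    refine Ideal.sum_mem _ fun d hd => ?_
    apply monomial_mem_qpow
    by_contra hlt
    exact (mem_support_iff.1 hd) (h d (by omega))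

theorem homog_mem_qpow {p : MvPolynomial (Fin e) k} {n : ℕ} (h : p.IsHomogeneous n) :
    p ∈ qIdeal k e ^ n := by
  rw [mem_qpow_iff]
  intro d hd
  exact h.coeff_eq_zero (by omega)

theorem comp_eq_zero_of_mem_qpow {p : MvPolynomial (Fin e) k} {m j : ℕ}
    (h : p ∈ qIdeal k e ^ m) (hj : j < m) : homogeneousComponent j p = 0 := by
  ext d
  rw [coeff_homogeneousComponent, coeff_zero]
  split
  · next hd => exact mem_qpow_iff.1 h d (by omega)
  · rfl

theorem mem_q_iff {p : MvPolynomial (Fin e) k} :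
    p ∈ qIdeal k e ↔ coeff 0 p = 0 := by
  have : p ∈ qIdeal k e ↔ p ∈ qIdeal k e ^ 1 := by rw [pow_one]
  rw [this, mem_qpow_iff]
  constructor
  · intro h; exact h 0 (by simp)
  · intro h d hd
    have : d = 0 := by rw [← Finsupp.degree_eq_zero_iff]; omega
    rwa [this]

theorem C_mem_q_iff {c : k} : (C c : MvPolynomial (Fin e) k) ∈ qIdeal k e ↔ c = 0 := by
  rw [mem_q_iff, coeff_zero_C]

theorem X_mem_q (t : Fin e) : (X t : MvPolynomial (Fin e) k) ∈ qIdeal k e :=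
  Ideal.subset_span ⟨t, rfl⟩

theorem sub_C_mem_q (p : MvPolynomial (Fin e) k) :
    p - C (constantCoeff p) ∈ qIdeal k e := by
  rw [mem_q_iff, coeff_sub, coeff_zero_C, constantCoeff_eq, sub_self]


/-- all homogeneous components of members belong to the ideal -/
def CompsMem (K : Ideal (MvPolynomial (Fin e) k)) : Prop :=
  ∀ p ∈ K, ∀ n, homogeneousComponent n p ∈ K

attribute [local instance] MvPolynomial.gradedAlgebra

theorem compsMem_of_isHomogeneousIdeal {K : Ideal (MvPolynomial (Fin e) k)}
    (h : IsHomogeneousIdeal k e K) : CompsMem K := by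
  obtain ⟨S, hS, rfl⟩ := h
  have hhom : (Ideal.span S).IsHomogeneous (homogeneousSubmodule (Fin e) k) :=
    Ideal.homogeneous_span _ S fun x hx => by
      obtain ⟨n, hn⟩ := hS x hx; exact ⟨n, hn⟩
  intro p hp n
  have h2 := hhom n hp
  have h3 : ((DirectSum.decompose (homogeneousSubmodule (Fin e) k) p n : _) :
      MvPolynomial (Fin e) k) = homogeneousComponent n p :=
    MvPolynomial.decomposition.decompose'_apply p n
  rwa [h3] at h2

theorem compsMem_inf {K K' : Ideal (MvPolynomial (Fin e) k)}
    (h : CompsMem K) (h' : CompsMem K') : CompsMem (K ⊓ K') :=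
  fun p hp n => ⟨h p hp.1 n, h' p hp.2 n⟩

theorem mem_of_comps_mem {K : Ideal (MvPolynomial (Fin e) k)} {p : MvPolynomial (Fin e) k}
    (h : ∀ n, homogeneousComponent n p ∈ K) : p ∈ K := by
  rw [← sum_homogeneousComponent p]
  exact Ideal.sum_mem _ fun i _ => h i

theorem exists_comp_notMem {K : Ideal (MvPolynomial (Fin e) k)} {p : MvPolynomial (Fin e) k}
    (h : p ∉ K) : ∃ n, homogeneousComponent n p ∉ K := by
  by_contra hc; push_neg at hc
  exact h (mem_of_comps_mem hc)

theorem comp_succ_X_mul (t : Fin e) (u : MvPolynomial (Fin e) k) (j : ℕ) :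
    homogeneousComponent (j + 1) (X t * u) = X t * homogeneousComponent j u := by
  classical
  ext d
  rw [coeff_homogeneousComponent, coeff_X_mul', coeff_X_mul']
  by_cases ht : t ∈ d.support
  · rw [if_pos ht, if_pos ht, coeff_homogeneousComponent]
    have hle : Finsupp.single t 1 ≤ d := by
      rw [Finsupp.single_le_iff]
      exact Nat.one_le_iff_ne_zero.2 (Finsupp.mem_support_iff.1 ht)
    have hdeg : (d - Finsupp.single t 1).degree + 1 = d.degree := by
      have h2 := degree_add (d - Finsupp.single t 1) (Finsupp.single t 1)
      rw [tsub_add_cancel_of_le hle, degree_single] at h2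
      omega
    by_cases hd : d.degree = j + 1
    · rw [if_pos hd, if_pos (by omega)]
    · rw [if_neg hd, if_neg (by omega)]
  · rw [if_neg ht, if_neg ht, ite_self]

theorem mul_mem_of_forall_X_mul {I : Ideal (MvPolynomial (Fin e) k)}
    {u : MvPolynomial (Fin e) k} (h : ∀ t : Fin e, X t * u ∈ I) :
    ∀ r ∈ qIdeal k e, r * u ∈ I := by
  intro r hr
  let T : Ideal (MvPolynomial (Fin e) k) :=
    { carrier := {p | p * u ∈ I}
      add_mem' := fun {a b} ha hb => by
        simp only [Set.mem_setOf_eq, add_mul] at *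
        exact Ideal.add_mem _ ha hb
      zero_mem' := by simp only [Set.mem_setOf_eq, zero_mul]; exact I.zero_mem
      smul_mem' := fun c {p} hp => by
        simp only [Set.mem_setOf_eq, smul_eq_mul, mul_assoc] at *
        exact Ideal.mul_mem_left _ _ hp }
  have hq : qIdeal k e ≤ T := by
    rw [qIdeal, Ideal.span_le]
    rintro _ ⟨t, rfl⟩
    exact h t
  exact hq hr

theorem compsMem_colon {J : Ideal (MvPolynomial (Fin e) k)} (hJ : CompsMem J) :
    CompsMem (J.colon (qIdeal k e)) := by
  intro p hp n
  rw [Submodule.mem_colon]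
  intro r hr
  rw [smul_eq_mul, mul_comm]
  refine mul_mem_of_forall_X_mul (fun t => ?_) r hr
  rw [← comp_succ_X_mul]
  apply hJ
  have := Submodule.mem_colon.1 hp (X t) (X_mem_q t)
  rwa [smul_eq_mul, mul_comm] at this

theorem mem_colon_of_forall {J : Ideal (MvPolynomial (Fin e) k)} {u : MvPolynomial (Fin e) k}
    (h : ∀ r ∈ qIdeal k e, r * u ∈ J) : u ∈ J.colon (qIdeal k e) := by
  rw [Submodule.mem_colon]
  intro r hr; rw [smul_eq_mul, mul_comm]; exact h r hr

theorem forall_of_mem_colon {J : Ideal (MvPolynomial (Fin e) k)} {u : MvPolynomial (Fin e) k}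
    (h : u ∈ J.colon (qIdeal k e)) : ∀ r ∈ qIdeal k e, r * u ∈ J := by
  intro r hr
  have := Submodule.mem_colon.1 h r hr
  rwa [smul_eq_mul, mul_comm] at this


/-- a homogeneous socle witness in degree `σ`. -/
theorem exists_homog_socle {K : Ideal (MvPolynomial (Fin e) k)} (hK : CompsMem K)
    {σ : ℕ} (h1 : ¬ qIdeal k e ^ σ ≤ K) (h2 : qIdeal k e ^ (σ + 1) ≤ K) :
    ∃ w : MvPolynomial (Fin e) k, w.IsHomogeneous σ ∧ w ∉ K := by
  obtain ⟨v, hvq, hv⟩ := SetLike.not_le_iff_exists.1 h1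
  obtain ⟨n, hn⟩ := exists_comp_notMem hv
  have hnσ : n = σ := by
    rcases lt_trichotomy n σ with h | h | h
    · exact absurd (by rw [comp_eq_zero_of_mem_qpow hvq h]; exact K.zero_mem) hn
    · exact h
    · exfalso
      apply hn
      apply h2
      have hle : qIdeal k e ^ n ≤ qIdeal k e ^ (σ + 1) :=
        Ideal.pow_le_pow_right (by omega)
      exact hle (homog_mem_qpow (homogeneousComponent_isHomogeneous n v))
  exact ⟨homogeneousComponent n v, hnσ ▸ homogeneousComponent_isHomogeneous n v, hn⟩

/-- socle of a homogeneous type-one (Gorenstein) ideal is concentrated in degree `σ`. -/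
theorem socle_concentration {I : Ideal (MvPolynomial (Fin e) k)} (hcm : CompsMem I)
    (hgor : HasTypeOne k e I) {σ : ℕ} (hsoc : SocDeg k e I σ)
    {p : MvPolynomial (Fin e) k} {n : ℕ}
    (hp : p.IsHomogeneous n) (hpI : p ∉ I) (hq : ∀ r ∈ qIdeal k e, r * p ∈ I) : n = σ := by
  obtain ⟨x1, hx1, hcol⟩ := hgor
  obtain ⟨w, hw, hwI⟩ := exists_homog_socle hcm hsoc.1 hsoc.2
  -- x1 is in the socle
  have hx1c : x1 ∈ I.colon (qIdeal k e) := by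
    rw [hcol]
    exact Submodule.mem_sup_right (Ideal.subset_span rfl)
  have hx1q : ∀ r ∈ qIdeal k e, r * x1 ∈ I := forall_of_mem_colon hx1c
  -- representations mod I
  have hrep : ∀ u : MvPolynomial (Fin e) k, u ∈ I.colon (qIdeal k e) →
      ∃ α : k, u - C α * x1 ∈ I := by
    intro u hu
    rw [hcol] at hu
    obtain ⟨a, ha, v, hv, rfl⟩ := Submodule.mem_sup.1 hu
    obtain ⟨r, rfl⟩ := Ideal.mem_span_singleton'.1 hv
    refine ⟨constantCoeff r, ?_⟩
    have h1 : (r - C (constantCoeff r)) * x1 ∈ I :=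
      hx1q _ (sub_C_mem_q r)
    have h2 : a + r * x1 - C (constantCoeff r) * x1 = a + (r - C (constantCoeff r)) * x1 := by
      ring
    rw [h2]
    exact Ideal.add_mem _ ha h1
  have hpc : p ∈ I.colon (qIdeal k e) := mem_colon_of_forall hq
  have hwc : w ∈ I.colon (qIdeal k e) := by
    apply mem_colon_of_forall
    intro r hr
    apply hsoc.2
    rw [pow_succ, mul_comm]
    exact Ideal.mul_mem_mul hr (homog_mem_qpow hw)
  obtain ⟨α, hα⟩ := hrep p hpc
  obtain ⟨β, hβ⟩ := hrep w hwc
  have hα0 : α ≠ 0 := by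
    rintro rfl
    apply hpI
    have := hα; rw [map_zero, zero_mul, sub_zero] at this; exact this
  have hβ0 : β ≠ 0 := by
    rintro rfl
    apply hwI
    have := hβ; rw [map_zero, zero_mul, sub_zero] at this; exact this
  by_contra hne
  -- z := C β * p - C α * w ∈ I
  have hz : C β * p - C α * w ∈ I := by
    have : C β * p - C α * w =
        C β * (p - C α * x1) - C α * (w - C β * x1) := by ring
    rw [this]
    exact Ideal.sub_mem _ (Ideal.mul_mem_left _ _ hα) (Ideal.mul_mem_left _ _ hβ)
  have hcompn := hcm _ hz n
  have hcompval : homogeneousComponent n (C β * p - C α * w) = C β * p := by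
    rw [map_sub, homogeneousComponent_C_mul, homogeneousComponent_C_mul,
      homogeneousComponent_of_mem hp, homogeneousComponent_of_mem hw,
      if_pos rfl, if_neg hne, mul_zero, sub_zero]
  rw [hcompval] at hcompn
  apply hpI
  have : p = C β⁻¹ * (C β * p) := by
    rw [← mul_assoc, ← map_mul, inv_mul_cancel₀ hβ0, map_one, one_mul]
  rw [this]
  exact Ideal.mul_mem_left _ _ hcompn

/-- a type-one ideal is not type-two -/
theorem not_typeTwo_of_typeOne {I : Ideal (MvPolynomial (Fin e) k)}
    (hgor : HasTypeOne k e I) (ht2 : HasTypeTwo k e I) : False := by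
  obtain ⟨z, hz, hcol⟩ := hgor
  obtain ⟨x, y, hcol2, hind⟩ := ht2
  have hzq : ∀ r ∈ qIdeal k e, r * z ∈ I := by
    apply forall_of_mem_colon
    rw [hcol]; exact Submodule.mem_sup_right (Ideal.subset_span rfl)
  have hrep : ∀ u : MvPolynomial (Fin e) k, u ∈ I.colon (qIdeal k e) →
      ∃ α : k, u - C α * z ∈ I := by
    intro u hu
    rw [hcol] at hu
    obtain ⟨a, ha, v, hv, rfl⟩ := Submodule.mem_sup.1 hu
    obtain ⟨r, rfl⟩ := Ideal.mem_span_singleton'.1 hv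
    refine ⟨constantCoeff r, ?_⟩
    have h1 : (r - C (constantCoeff r)) * z ∈ I := hzq _ (sub_C_mem_q r)
    have h2 : a + r * z - C (constantCoeff r) * z = a + (r - C (constantCoeff r)) * z := by
      ring
    rw [h2]; exact Ideal.add_mem _ ha h1
  have hx : x ∈ I.colon (qIdeal k e) := by
    rw [hcol2]
    exact Submodule.mem_sup_right (Ideal.subset_span (by simp))
  have hy : y ∈ I.colon (qIdeal k e) := by
    rw [hcol2]
    exact Submodule.mem_sup_right (Ideal.subset_span (by simp))
  obtain ⟨α, hα⟩ := hrep x hx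
  obtain ⟨β, hβ⟩ := hrep y hy
  -- C β * x - C α * y ∈ I
  have hmem : C β * x + C (-α) * y ∈ I := by
    have : C β * x + C (-α) * y =
        C β * (x - C α * z) - C α * (y - C β * z) := by
      rw [map_neg]; ring
    rw [this]
    exact Ideal.sub_mem _ (Ideal.mul_mem_left _ _ hα) (Ideal.mul_mem_left _ _ hβ)
  obtain ⟨hb, ha⟩ := hind _ _ hmem
  rw [C_mem_q_iff] at hb ha
  have hα0 : α = 0 := by
    have := ha; rwa [neg_eq_zero] at this
  -- now x ∈ I
  have hxI : x ∈ I := by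
    have := hα; rw [hα0, map_zero, zero_mul, sub_zero] at this; exact this
  have : (1 : MvPolynomial (Fin e) k) * x + 0 * y ∈ I := by
    rw [one_mul, zero_mul, add_zero]; exact hxI
  obtain ⟨h1, _⟩ := hind _ _ this
  rw [← C_1, C_mem_q_iff] at h1
  exact one_ne_zero h1


section Dim

/-- the degree-`i` exponents are equivalent to `Sym (Fin e) i`. -/
noncomputable def degreeSetEquiv (e i : ℕ) :
    {d : Fin e →₀ ℕ // d.degree = i} ≃ Sym (Fin e) i := by
  classical
  refine Equiv.subtypeEquiv (Finsupp.orderIsoMultiset (ι := Fin e)).toEquiv ?_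
  intro d
  show d.degree = i ↔ Multiset.card (Finsupp.orderIsoMultiset d) = i
  have h1 : (Finsupp.orderIsoMultiset (ι := Fin e)) d = Finsupp.toMultiset d := by
    rw [Finsupp.coe_orderIsoMultiset]
  rw [h1, Finsupp.card_toMultiset]
  rfl

noncomputable instance fintypeDegreeSet (e i : ℕ) : Fintype {d : Fin e →₀ ℕ // d.degree = i} :=
  Fintype.ofEquiv _ (degreeSetEquiv e i).symm

theorem card_degreeSet (he : 1 ≤ e) (i : ℕ) :
    Fintype.card {d : Fin e →₀ ℕ // d.degree = i} = hQ e i := by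
  rw [Fintype.card_congr (degreeSetEquiv e i), Sym.card_sym_eq_multichoose,
    Fintype.card_fin, Nat.multichoose_eq, hQ]
  have h1 : e + i - 1 = e - 1 + i := by omega
  rw [h1]
  exact (Nat.choose_symm (by omega)).symm.trans (by congr 1; omega)

noncomputable def homogBasis (e i : ℕ) :
    Module.Basis {d : Fin e →₀ ℕ // d.degree = i} k
      ↥(homogeneousSubmodule (Fin e) k i) := by
  rw [homogeneousSubmodule_eq_finsupp_supported]
  exact MvPolynomial.basisRestrictSupport k {d | d.degree = i}

instance fdHomog (i : ℕ) : FiniteDimensional k ↥(homogeneousSubmodule (Fin e) k i) :=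
  Module.Finite.of_basis (homogBasis e i)

theorem finrank_homog (he : 1 ≤ e) (i : ℕ) :
    Module.finrank k ↥(homogeneousSubmodule (Fin e) k i) = hQ e i := by
  rw [Module.finrank_eq_card_basis (homogBasis (k := k) e i), card_degreeSet he]

set_option synthInstance.maxHeartbeats 1000000 in
set_option maxHeartbeats 1000000 in
/-- The bridge between `hilb` and the codimension of the degree-`i` part of `K`. -/
theorem hilb_add_finrank (he : 1 ≤ e) (K : Ideal (MvPolynomial (Fin e) k)) (hK : CompsMem K)
    (i : ℕ) :
    hilb k e K i + Module.finrank k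
      ↥(homogeneousSubmodule (Fin e) k i ⊓ Submodule.restrictScalars k K) = hQ e i := by
  classical
  set W := homogeneousSubmodule (Fin e) k i with hW
  set Iq : Ideal (MvPolynomial (Fin e) k) := qIdeal k e ^ (i + 1) ⊔ K with hIq
  let π : MvPolynomial (Fin e) k →ₗ[k] (MvPolynomial (Fin e) k ⧸ Iq) :=
    (Ideal.Quotient.mkₐ k Iq).toLinearMap
  let φ : W →ₗ[k] (MvPolynomial (Fin e) k ⧸ Iq) := π.comp W.subtype
  have hrange : LinearMap.range φ =
      Submodule.restrictScalars k
        ((Ideal.map (Ideal.Quotient.mk Iq) (qIdeal k e ^ i ⊔ K))) := by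
    apply le_antisymm
    · rintro z ⟨⟨w, hw⟩, rfl⟩
      have hwq : w ∈ qIdeal k e ^ i ⊔ K :=
        Submodule.mem_sup_left (homog_mem_qpow hw)
      exact Ideal.mem_map_of_mem _ hwq
    · intro z hz
      have hz' : z ∈ Ideal.map (Ideal.Quotient.mk Iq) (qIdeal k e ^ i ⊔ K) := hz
      rw [Ideal.mem_map_iff_of_surjective _ Ideal.Quotient.mk_surjective] at hz'
      obtain ⟨u, hu, rfl⟩ := hz'
      obtain ⟨a, ha, b, hb, rfl⟩ := Submodule.mem_sup.1 hu
      refine ⟨⟨homogeneousComponent i a, homogeneousComponent_mem i a⟩, ?_⟩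
      show Ideal.Quotient.mk Iq (homogeneousComponent i a) = Ideal.Quotient.mk Iq (a + b)
      rw [Ideal.Quotient.mk_eq_mk_iff_sub_mem]
      have h1 : homogeneousComponent i a - (a + b) = -((a - homogeneousComponent i a) + b) := by
        ring
      rw [h1]
      apply neg_mem
      apply Ideal.add_mem _
      · apply Submodule.mem_sup_left
        rw [mem_qpow_iff]
        intro d hd
        rw [coeff_sub, coeff_homogeneousComponent]
        by_cases hdeg : d.degree = i
        · rw [if_pos hdeg, sub_self]
        · rw [if_neg hdeg, sub_zero]
          exact mem_qpow_iff.1 ha d (by omega)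
      · exact Submodule.mem_sup_right hb
  have hker : LinearMap.ker φ =
      Submodule.comap W.subtype (W ⊓ Submodule.restrictScalars k K) := by
    ext ⟨w, hw⟩
    simp only [LinearMap.mem_ker, Submodule.mem_comap, Submodule.mem_inf]
    constructor
    · intro h
      have hmem : w ∈ Iq := by
        have : Ideal.Quotient.mk Iq w = 0 := h
        rwa [Ideal.Quotient.eq_zero_iff_mem] at this
      obtain ⟨u, hu, b, hb, huvw⟩ := Submodule.mem_sup.1 hmem
      have hcomp : homogeneousComponent i w = w := by
        rw [homogeneousComponent_of_mem hw, if_pos rfl]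
      refine ⟨hw, ?_⟩
      show w ∈ K
      have hsplit : homogeneousComponent i w
          = homogeneousComponent i u + homogeneousComponent i b := by
        rw [← map_add, huvw]
      rw [← hcomp, hsplit, comp_eq_zero_of_mem_qpow hu (by omega), zero_add]
      exact hK b hb i
    · intro ⟨_, hwK⟩
      show Ideal.Quotient.mk Iq w = 0
      rw [Ideal.Quotient.eq_zero_iff_mem]
      exact Submodule.mem_sup_right hwK
  have hrn := LinearMap.finrank_range_add_finrank_ker φ
  have h1 : Module.finrank k (LinearMap.range φ) = hilb k e K i := by
    rw [hrange]; rfl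
  have h2 : Module.finrank k (LinearMap.ker φ) =
      Module.finrank k ↥(W ⊓ Submodule.restrictScalars k K) := by
    rw [hker]
    exact LinearEquiv.finrank_eq
      (Submodule.comapSubtypeEquivOfLe inf_le_left)
  rw [h1, h2] at hrn
  rw [← finrank_homog (k := k) he i]
  exact hrn


theorem hQ_pos (e i : ℕ) : 0 < hQ e i := Nat.choose_pos (by omega)

instance fdInf (i : ℕ) (X : Submodule k (MvPolynomial (Fin e) k)) :
    FiniteDimensional k ↥(homogeneousSubmodule (Fin e) k i ⊓ X) :=
  Submodule.finiteDimensional_of_le (inf_le_left (b := X))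

theorem finrank_inf_pos {i : ℕ} {X : Submodule k (MvPolynomial (Fin e) k)}
    {z : MvPolynomial (Fin e) k} (hz : z ∈ homogeneousSubmodule (Fin e) k i ⊓ X)
    (hz0 : z ≠ 0) :
    1 ≤ Module.finrank k ↥(homogeneousSubmodule (Fin e) k i ⊓ X) := by
  by_contra h
  have h0 : Module.finrank k ↥(homogeneousSubmodule (Fin e) k i ⊓ X) = 0 := by omega
  rw [Submodule.finrank_eq_zero] at h0
  rw [h0] at hz
  exact hz0 hz

theorem gp_eq_of_hilb_eq (he : 1 ≤ e) {K K' : Ideal (MvPolynomial (Fin e) k)}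
    (hKK' : K ≤ K') (hcmK : CompsMem K) (hcmK' : CompsMem K') {i : ℕ}
    (hh : hilb k e K i = hilb k e K' i) :
    homogeneousSubmodule (Fin e) k i ⊓ Submodule.restrictScalars k K
      = homogeneousSubmodule (Fin e) k i ⊓ Submodule.restrictScalars k K' := by
  have b1 := hilb_add_finrank he K hcmK i
  have b2 := hilb_add_finrank he K' hcmK' i
  have hle : homogeneousSubmodule (Fin e) k i ⊓ Submodule.restrictScalars k K
      ≤ homogeneousSubmodule (Fin e) k i ⊓ Submodule.restrictScalars k K' :=
    inf_le_inf_left _ fun x hx => hKK' hx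
  exact Submodule.eq_of_le_of_finrank_eq hle (by omega)

end Dim


section Span
variable {J : Ideal (MvPolynomial (Fin e) k)}

theorem sSup_val_eq {v : MvPolynomial (Fin e) k} {n : ℕ}
    (hmem : v ∈ qIdeal k e ^ n ⊔ J) (hnot : v ∉ qIdeal k e ^ (n + 1) ⊔ J) :
    sSup {i : ℕ | v ∈ qIdeal k e ^ i ⊔ J} = n := by
  have hdc : ∀ {i j : ℕ}, i ≤ j → v ∈ qIdeal k e ^ j ⊔ J → v ∈ qIdeal k e ^ i ⊔ J := by
    intro i j hij hv
    exact sup_le_sup_right (Ideal.pow_le_pow_right hij) J hv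
  have hub : ∀ m ∈ {i : ℕ | v ∈ qIdeal k e ^ i ⊔ J}, m ≤ n := by
    intro m hm
    by_contra hc
    exact hnot (hdc (by omega) hm)
  exact le_antisymm (csSup_le ⟨n, hmem⟩ hub) (le_csSup ⟨n, hub⟩ hmem)

/-- scalar independence mod `J` -/
def Pind (J : Ideal (MvPolynomial (Fin e) k)) (x y : MvPolynomial (Fin e) k) : Prop :=
  ∀ α β : k, C α * x + C β * y ∈ J → α = 0 ∧ β = 0

theorem Pind.notMem_left {x y : MvPolynomial (Fin e) k} (h : Pind J x y) : x ∉ J := by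
  intro hx
  have := h 1 0 (by rw [map_one, one_mul, map_zero, zero_mul, add_zero]; exact hx)
  exact one_ne_zero this.1

theorem Pind.notMem_right {x y : MvPolynomial (Fin e) k} (h : Pind J x y) : y ∉ J := by
  intro hy
  have := h 0 1 (by rw [map_one, one_mul, map_zero, zero_mul, zero_add]; exact hy)
  exact one_ne_zero this.2

theorem pind_of_cond {x y : MvPolynomial (Fin e) k}
    (h : ∀ a b : MvPolynomial (Fin e) k, a * x + b * y ∈ J →
      a ∈ qIdeal k e ∧ b ∈ qIdeal k e) : Pind J x y := by
  intro α β hm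
  have := h _ _ hm
  rwa [C_mem_q_iff, C_mem_q_iff] at this

theorem cond_of_pind {x y : MvPolynomial (Fin e) k}
    (hx : ∀ r ∈ qIdeal k e, r * x ∈ J) (hy : ∀ r ∈ qIdeal k e, r * y ∈ J)
    (hP : Pind J x y) :
    ∀ c d : MvPolynomial (Fin e) k, c * x + d * y ∈ J →
      c ∈ qIdeal k e ∧ d ∈ qIdeal k e := by
  intro c d hm
  have h1 : (c - C (constantCoeff c)) * x ∈ J := hx _ (sub_C_mem_q c)
  have h2 : (d - C (constantCoeff d)) * y ∈ J := hy _ (sub_C_mem_q d)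
  have h3 : C (constantCoeff c) * x + C (constantCoeff d) * y ∈ J := by
    have heq : C (constantCoeff c) * x + C (constantCoeff d) * y =
        (c * x + d * y) - ((c - C (constantCoeff c)) * x + (d - C (constantCoeff d)) * y) := by
      ring
    rw [heq]
    exact Ideal.sub_mem _ hm (Ideal.add_mem _ h1 h2)
  obtain ⟨hc0, hd0⟩ := hP _ _ h3
  constructor
  · rw [mem_q_iff, ← constantCoeff_eq]; exact hc0
  · rw [mem_q_iff, ← constantCoeff_eq]; exact hd0

theorem exists_rep {x0 y0 : MvPolynomial (Fin e) k}
    (hx0 : ∀ r ∈ qIdeal k e, r * x0 ∈ J) (hy0 : ∀ r ∈ qIdeal k e, r * y0 ∈ J)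
    {u : MvPolynomial (Fin e) k} (hu : u ∈ J ⊔ Ideal.span {x0, y0}) :
    ∃ α β : k, u - (C α * x0 + C β * y0) ∈ J := by
  obtain ⟨a, ha, v, hv, rfl⟩ := Submodule.mem_sup.1 hu
  obtain ⟨r, s, rfl⟩ := Ideal.mem_span_pair.1 hv
  refine ⟨constantCoeff r, constantCoeff s, ?_⟩
  have h1 : (r - C (constantCoeff r)) * x0 ∈ J := hx0 _ (sub_C_mem_q r)
  have h2 : (s - C (constantCoeff s)) * y0 ∈ J := hy0 _ (sub_C_mem_q s)
  have heq : a + (r * x0 + s * y0) - (C (constantCoeff r) * x0 + C (constantCoeff s) * y0)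
      = a + ((r - C (constantCoeff r)) * x0 + (s - C (constantCoeff s)) * y0) := by ring
  rw [heq]
  exact Ideal.add_mem _ ha (Ideal.add_mem _ h1 h2)

theorem colon_span_swap {x0 y0 x y : MvPolynomial (Fin e) k}
    (hcolon : J.colon (qIdeal k e) = J ⊔ Ideal.span {x0, y0})
    (hx : x ∈ J.colon (qIdeal k e)) (hy : y ∈ J.colon (qIdeal k e))
    (hPxy : Pind J x y) :
    J.colon (qIdeal k e) = J ⊔ Ideal.span {x, y} := by
  have hx0c : x0 ∈ J.colon (qIdeal k e) := by
    rw [hcolon]; exact Submodule.mem_sup_right (Ideal.subset_span (by simp))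
  have hy0c : y0 ∈ J.colon (qIdeal k e) := by
    rw [hcolon]; exact Submodule.mem_sup_right (Ideal.subset_span (by simp))
  have hx0 := forall_of_mem_colon hx0c
  have hy0 := forall_of_mem_colon hy0c
  obtain ⟨a1, b1, hxr⟩ := exists_rep hx0 hy0 (hcolon ▸ hx)
  obtain ⟨a2, b2, hyr⟩ := exists_rep hx0 hy0 (hcolon ▸ hy)
  have comb : ∀ γ δ : k,
      C γ * x + C δ * y - (C (γ * a1 + δ * a2) * x0 + C (γ * b1 + δ * b2) * y0) ∈ J := by
    intro γ δ
    have heq : C γ * x + C δ * y - (C (γ * a1 + δ * a2) * x0 + C (γ * b1 + δ * b2) * y0)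
        = C γ * (x - (C a1 * x0 + C b1 * y0)) + C δ * (y - (C a2 * x0 + C b2 * y0)) := by
      simp only [map_add, map_mul]; ring
    rw [heq]
    exact Ideal.add_mem _ (Ideal.mul_mem_left _ _ hxr) (Ideal.mul_mem_left _ _ hyr)
  have hdet : a1 * b2 - a2 * b1 ≠ 0 := by
    intro hd0
    have h1 := comb b2 (-b1)
    have hz1 : b2 * a1 + -b1 * a2 = 0 := by linear_combination hd0
    have hz2 : b2 * b1 + -b1 * b2 = 0 := by ring
    rw [hz1, hz2, map_zero, zero_mul, zero_mul, add_zero, sub_zero] at h1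
    obtain ⟨hb2, hb1⟩ := hPxy _ _ h1
    rw [neg_eq_zero] at hb1
    have h2 := comb a2 (-a1)
    have hz3 : a2 * a1 + -a1 * a2 = 0 := by ring
    have hz4 : a2 * b1 + -a1 * b2 = 0 := by linear_combination -hd0
    rw [hz3, hz4, map_zero, zero_mul, zero_mul, add_zero, sub_zero] at h2
    obtain ⟨ha2, ha1⟩ := hPxy _ _ h2
    rw [neg_eq_zero] at ha1
    apply hPxy.notMem_left
    have h3 := hxr
    rw [ha1, hb1, map_zero, zero_mul, zero_mul, add_zero, sub_zero] at h3
    exact h3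
  apply le_antisymm
  · intro u hu
    obtain ⟨α, β, hur⟩ := exists_rep hx0 hy0 (hcolon ▸ hu)
    set dt : k := a1 * b2 - a2 * b1 with hdtdef
    have hdt : dt ≠ 0 := hdet
    refine ?_
    have e1 : (α * b2 - β * a2) / dt * a1 + (β * a1 - α * b1) / dt * a2 = α := by
      field_simp
      ring
    have e2 : (α * b2 - β * a2) / dt * b1 + (β * a1 - α * b1) / dt * b2 = β := by
      field_simp
      ring
    have h4 := comb ((α * b2 - β * a2) / dt) ((β * a1 - α * b1) / dt)
    rw [e1, e2] at h4
    have hkey : u - (C ((α * b2 - β * a2) / dt) * x + C ((β * a1 - α * b1) / dt) * y) ∈ J := by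
      have heq : u - (C ((α * b2 - β * a2) / dt) * x + C ((β * a1 - α * b1) / dt) * y)
          = (u - (C α * x0 + C β * y0))
            - (C ((α * b2 - β * a2) / dt) * x + C ((β * a1 - α * b1) / dt) * y
              - (C α * x0 + C β * y0)) := by ring
      rw [heq]
      exact Ideal.sub_mem _ hur h4
    have hfin : u = (u - (C ((α * b2 - β * a2) / dt) * x + C ((β * a1 - α * b1) / dt) * y))
        + (C ((α * b2 - β * a2) / dt) * x + C ((β * a1 - α * b1) / dt) * y) := by ring
    rw [hfin]
    exact Submodule.add_mem _ (Submodule.mem_sup_left hkey)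
      (Submodule.mem_sup_right (Ideal.mem_span_pair.2 ⟨_, _, rfl⟩))
  · apply sup_le
    · intro j hj
      exact mem_colon_of_forall fun r _ => Ideal.mul_mem_left _ _ hj
    · rw [Ideal.span_le]
      intro z hz
      rcases hz with rfl | hz
      · exact hx
      · rcases hz with rfl
        exact hy

theorem pind_or {x0 y0 x : MvPolynomial (Fin e) k}
    (hP0 : Pind J x0 y0) (hxJ : x ∉ J) :
    Pind J x x0 ∨ Pind J x y0 := by
  by_contra hc
  push_neg at hc
  obtain ⟨h1, h2⟩ := hc
  rw [Pind] at h1 h2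
  push_neg at h1 h2
  obtain ⟨α1, β1, hm1, hne1⟩ := h1
  obtain ⟨α2, β2, hm2, hne2⟩ := h2
  have hx0J : x0 ∉ J := hP0.notMem_left
  have hy0J : y0 ∉ J := hP0.notMem_right
  have hscal : ∀ (γ : k) (w : MvPolynomial (Fin e) k), C γ * w ∈ J → γ ≠ 0 → w ∈ J := by
    intro γ w hw hγ
    have : w = C γ⁻¹ * (C γ * w) := by
      rw [← mul_assoc, ← map_mul, inv_mul_cancel₀ hγ, map_one, one_mul]
    rw [this]; exact Ideal.mul_mem_left _ _ hw
  have hα1 : α1 ≠ 0 := by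
    rintro rfl
    rw [map_zero, zero_mul, zero_add] at hm1
    rcases eq_or_ne β1 0 with rfl | hβ
    · exact hne1 rfl rfl
    · exact hx0J (hscal _ _ hm1 hβ)
  have hβ1 : β1 ≠ 0 := by
    rintro rfl
    rw [map_zero, zero_mul, add_zero] at hm1
    exact hxJ (hscal _ _ hm1 hα1)
  have hα2 : α2 ≠ 0 := by
    rintro rfl
    rw [map_zero, zero_mul, zero_add] at hm2
    rcases eq_or_ne β2 0 with rfl | hβ
    · exact hne2 rfl rfl
    · exact hy0J (hscal _ _ hm2 hβ)
  have hβ2 : β2 ≠ 0 := by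
    rintro rfl
    rw [map_zero, zero_mul, add_zero] at hm2
    exact hxJ (hscal _ _ hm2 hα2)
  have hcomb : C (α2 * β1) * x0 + C (-(α1 * β2)) * y0 ∈ J := by
    have heq : C (α2 * β1) * x0 + C (-(α1 * β2)) * y0 =
        C α2 * (C α1 * x + C β1 * x0) - C α1 * (C α2 * x + C β2 * y0) := by
      simp only [map_neg, map_mul]; ring
    rw [heq]
    exact Ideal.sub_mem _ (Ideal.mul_mem_left _ _ hm1) (Ideal.mul_mem_left _ _ hm2)
  obtain ⟨hz, _⟩ := hP0 _ _ hcomb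
  exact hα2 (by
    rcases mul_eq_zero.1 hz with h | h
    · exact h
    · exact absurd h hβ1)

end Span

end Aux

/-- In the setup of two homogeneous compressed Gorenstein
ideals `I1, I2` in `e ≥ 3` variables with `R = Q/(I1 ∩ I2)` compressed of type
2, the socle polynomial of `R` is `χ^{s1} + χ^{s}` (i.e. the socle of `R` has a
basis consisting of one element of valuation `s1` and one of valuation `s`),
and `a = min{ i ≥ 0 : q^i I2 ⊆ I1 }` equals `s1 − t2 + 1`. -/
theorem stmt12 (k : Type*) [Field k] (e : ℕ) (he : 3 ≤ e)
    (I1 I2 : Ideal (MvPolynomial (Fin e) k))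
    (h1hom : IsHomogeneousIdeal k e I1) (h2hom : IsHomogeneousIdeal k e I2)
    (h1p : I1.IsPrimary) (h1r : I1.radical = qIdeal k e)
    (h2p : I2.IsPrimary) (h2r : I2.radical = qIdeal k e)
    (h1q2 : I1 ≤ qIdeal k e ^ 2) (h2q2 : I2 ≤ qIdeal k e ^ 2)
    (h1gor : HasTypeOne k e I1) (h2gor : HasTypeOne k e I2)
    (s1 s2 s t2 a : ℕ)
    (hs1 : SocDeg k e I1 s1) (hs2 : SocDeg k e I2 s2) (hle : s1 ≤ s2)
    (ht2 : IniDeg k e I2 t2)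
    (h1c : CompressedGor k e I1 s1) (h2c : CompressedGor k e I2 s2)
    (htype2 : HasTypeTwo k e (I1 ⊓ I2))
    (hs : SocDeg k e (I1 ⊓ I2) s)
    -- `R` is compressed
    (hcomp : ∃ b ≤ s, ∀ i,
      hilb k e (I1 ⊓ I2) i = min (hQ e i) (hQat e b i + hQat e s i))
    (ha : a = sInf {i : ℕ | qIdeal k e ^ i * I2 ≤ I1}) :
    (∃ x y : MvPolynomial (Fin e) k,
      (I1 ⊓ I2).colon (qIdeal k e) = (I1 ⊓ I2) ⊔ Ideal.span {x, y} ∧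
      (∀ c d : MvPolynomial (Fin e) k, c * x + d * y ∈ I1 ⊓ I2 →
        c ∈ qIdeal k e ∧ d ∈ qIdeal k e) ∧
      sSup {i : ℕ | x ∈ qIdeal k e ^ i ⊔ (I1 ⊓ I2)} = s1 ∧
      sSup {i : ℕ | y ∈ qIdeal k e ^ i ⊔ (I1 ⊓ I2)} = s) ∧
    a = s1 - t2 + 1 := by
  classical
  have he1 : 1 ≤ e := by omega
  have hcm1 : Aux.CompsMem I1 := Aux.compsMem_of_isHomogeneousIdeal h1hom
  have hcm2 : Aux.CompsMem I2 := Aux.compsMem_of_isHomogeneousIdeal h2hom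
  have hcmJ : Aux.CompsMem (I1 ⊓ I2) := Aux.compsMem_inf hcm1 hcm2
  -- not I2 ≤ I1 (else the intersection is Gorenstein, contradicting type two)
  have hclash : ¬ I2 ≤ I1 := by
    intro hle2
    have hJI2 : I1 ⊓ I2 = I2 := inf_eq_right.2 hle2
    rw [hJI2] at htype2
    exact Aux.not_typeTwo_of_typeOne h2gor htype2
  -- s = s2
  have hss2 : s = s2 := by
    have hq1 : qIdeal k e ^ (s2 + 1) ≤ I1 ⊓ I2 :=
      le_inf ((Ideal.pow_le_pow_right (by omega)).trans hs1.2) hs2.2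
    have h1 : s ≤ s2 := by
      by_contra hc
      exact hs.1 ((Ideal.pow_le_pow_right (by omega)).trans hq1)
    have h2 : s2 ≤ s := by
      by_contra hc
      exact hs2.1 ((Ideal.pow_le_pow_right (by omega)).trans (hs.2.trans inf_le_right))
    omega
  have hs1s : s1 ≤ s := by
    by_contra hc
    exact hs1.1 ((Ideal.pow_le_pow_right (by omega)).trans (hs.2.trans inf_le_left))
  have ht2s1 : t2 ≤ s1 := by
    by_contra hc
    exact hclash (ht2.1.trans ((Ideal.pow_le_pow_right (by omega)).trans hs1.2))
  obtain ⟨b, hbs, hH⟩ := hcomp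
  -- b ≥ t2
  have hbt2 : t2 ≤ b := by
    by_contra hc
    apply hclash
    intro g hg
    apply Aux.mem_of_comps_mem
    intro n
    by_cases hn : n ≤ b
    · have h0 : homogeneousComponent n g = 0 :=
        Aux.comp_eq_zero_of_mem_qpow (ht2.1 hg) (by omega)
      rw [h0]; exact I1.zero_mem
    · have hhilb : hilb k e (I1 ⊓ I2) n = hilb k e I2 n := by
        rw [hH n, h2c n, hss2]
        have hz : hQat e b n = 0 := by rw [hQat, if_neg (by omega)]
        rw [hz, zero_add]
      have hgp := Aux.gp_eq_of_hilb_eq he1 inf_le_right hcmJ hcm2 hhilb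
      have hmem2 : homogeneousComponent n g ∈
          homogeneousSubmodule (Fin e) k n ⊓ Submodule.restrictScalars k I2 :=
        ⟨homogeneousComponent_mem n g, hcm2 g hg n⟩
      rw [← hgp] at hmem2
      exact hmem2.2.1
  -- lower bound for a
  have hlower : ¬ (qIdeal k e ^ (s1 - t2) * I2 ≤ I1) := by
    intro hcontra
    have htf : ∀ f : MvPolynomial (Fin e) k, f.IsHomogeneous t2 → f ∈ I2 → f ∈ I1 := by
      intro f hf hfI2
      by_contra hfI1
      have hTbdd : ∀ j ∈ {j : ℕ | ∃ w : MvPolynomial (Fin e) k,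
          w.IsHomogeneous j ∧ w * f ∉ I1}, j ≤ s1 - t2 := by
        rintro j ⟨w, hwj, hwf⟩
        by_contra hc
        apply hwf
        have hmemp : w * f ∈ qIdeal k e ^ (j + t2) := Aux.homog_mem_qpow (hwj.mul hf)
        exact hs1.2 (Ideal.pow_le_pow_right (by omega) hmemp)
      have h0T : 0 ∈ {j : ℕ | ∃ w : MvPolynomial (Fin e) k,
          w.IsHomogeneous j ∧ w * f ∉ I1} :=
        ⟨1, isHomogeneous_one _ _, by rwa [one_mul]⟩
      have hjT := Nat.sSup_mem ⟨0, h0T⟩ ⟨s1 - t2, fun j hj => hTbdd j hj⟩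
      obtain ⟨w, hwj, hwf⟩ := hjT
      have hmax : ∀ t : Fin e, X t * (w * f) ∈ I1 := by
        intro t
        by_contra hc
        have hmem : sSup {j : ℕ | ∃ w : MvPolynomial (Fin e) k,
            w.IsHomogeneous j ∧ w * f ∉ I1} + 1 ∈ {j : ℕ | ∃ w : MvPolynomial (Fin e) k,
            w.IsHomogeneous j ∧ w * f ∉ I1} := by
          refine ⟨X t * w, ?_, by rwa [mul_assoc]⟩
          have hmul := (isHomogeneous_X k t).mul hwj
          rwa [add_comm] at hmul
        have := le_csSup ⟨s1 - t2, fun j hj => hTbdd j hj⟩ hmem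
        omega
      have hqmul : ∀ r ∈ qIdeal k e, r * (w * f) ∈ I1 := Aux.mul_mem_of_forall_X_mul hmax
      have hdeg := Aux.socle_concentration hcm1 h1gor hs1 (hwj.mul hf) hwf hqmul
      apply hwf
      have hwq : w ∈ qIdeal k e ^ (s1 - t2) := by
        have hw' : w ∈ qIdeal k e ^ (sSup {j : ℕ | ∃ w : MvPolynomial (Fin e) k,
            w.IsHomogeneous j ∧ w * f ∉ I1}) := Aux.homog_mem_qpow hwj
        exact Ideal.pow_le_pow_right (by omega) hw'
      exact hcontra (Ideal.mul_mem_mul hwq hfI2)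
    obtain ⟨v, hvI2, hvq⟩ := SetLike.not_le_iff_exists.1 ht2.2
    obtain ⟨d0, hd0deg, hd0c⟩ : ∃ d0 : Fin e →₀ ℕ, d0.degree < t2 + 1 ∧ coeff d0 v ≠ 0 := by
      by_contra hcon; push_neg at hcon
      exact hvq (Aux.mem_qpow_iff.2 hcon)
    have hf0I2 : homogeneousComponent d0.degree v ∈ I2 := hcm2 v hvI2 _
    have hf0ne : homogeneousComponent d0.degree v ≠ 0 := by
      intro h0
      apply hd0c
      have hcc : coeff d0 (homogeneousComponent d0.degree v) = coeff d0 v := by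
        rw [coeff_homogeneousComponent, if_pos rfl]
      rw [h0, coeff_zero] at hcc
      exact hcc.symm
    have hdeg0 : d0.degree = t2 := by
      have hge : t2 ≤ d0.degree := by
        by_contra hcon
        exact hd0c (Aux.mem_qpow_iff.1 (ht2.1 hvI2) d0 (by omega))
      omega
    have hgpt2 : homogeneousSubmodule (Fin e) k t2 ⊓ Submodule.restrictScalars k (I1 ⊓ I2)
        = homogeneousSubmodule (Fin e) k t2 ⊓ Submodule.restrictScalars k I2 := by
      apply le_antisymm (inf_le_inf_left _ fun x hx => hx.2)
      rintro z ⟨hz1, hz2⟩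
      exact ⟨hz1, htf z hz1 hz2, hz2⟩
    have b1 := Aux.hilb_add_finrank he1 _ hcmJ t2
    have b2 := Aux.hilb_add_finrank he1 _ hcm2 t2
    rw [hgpt2] at b1
    have hrk : 1 ≤ Module.finrank k
        ↥(homogeneousSubmodule (Fin e) k t2 ⊓ Submodule.restrictScalars k I2) :=
      Aux.finrank_inf_pos ⟨hdeg0 ▸ homogeneousComponent_isHomogeneous d0.degree v, hf0I2⟩ hf0ne
    have hI2lt : hilb k e I2 t2 < hQ e t2 := by omega
    have hI2c := h2c t2
    rw [hQat, if_pos (by omega : t2 ≤ s2)] at hI2c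
    have hJt2 := hH t2
    rw [hss2, hQat, if_pos (by omega : t2 ≤ b), hQat, if_pos (by omega : t2 ≤ s2)] at hJt2
    have hposb := Aux.hQ_pos e (b - t2)
    have hhilbeq : hilb k e (I1 ⊓ I2) t2 = hilb k e I2 t2 := by omega
    omega
  -- upper bound for a
  have hupper : qIdeal k e ^ (s1 - t2 + 1) * I2 ≤ I1 := by
    have h1 : qIdeal k e ^ (s1 - t2 + 1) * I2
        ≤ qIdeal k e ^ (s1 - t2 + 1) * qIdeal k e ^ t2 := Ideal.mul_mono_right ht2.1
    have h2 : qIdeal k e ^ (s1 - t2 + 1) * qIdeal k e ^ t2 = qIdeal k e ^ (s1 + 1) := by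
      rw [← pow_add]; congr 1; omega
    rw [h2] at h1
    exact h1.trans hs1.2
  have haval : a = s1 - t2 + 1 := by
    rw [ha]
    apply le_antisymm
    · exact Nat.sInf_le hupper
    · have hne : {i : ℕ | qIdeal k e ^ i * I2 ≤ I1}.Nonempty := ⟨_, hupper⟩
      have hmem := Nat.sInf_mem hne
      by_contra hc
      apply hlower
      have hle' : qIdeal k e ^ (s1 - t2)
          ≤ qIdeal k e ^ sInf {i : ℕ | qIdeal k e ^ i * I2 ≤ I1} :=
        Ideal.pow_le_pow_right (by omega)
      exact (Ideal.mul_mono_left hle').trans hmem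
  -- construction of the socle element x of valuation s1
  have hT'b : ∀ n ∈ {n : ℕ | ∃ u : MvPolynomial (Fin e) k,
      u.IsHomogeneous n ∧ u ∈ I2 ∧ u ∉ I1}, n ≤ s1 := by
    rintro n ⟨u, hu, hu2, hu1⟩
    by_contra hc
    exact hu1 (hs1.2 (Ideal.pow_le_pow_right (by omega) (Aux.homog_mem_qpow hu)))
  have hT'ne : {n : ℕ | ∃ u : MvPolynomial (Fin e) k,
      u.IsHomogeneous n ∧ u ∈ I2 ∧ u ∉ I1}.Nonempty := by
    obtain ⟨v, hv2, hv1⟩ := SetLike.not_le_iff_exists.1 hclash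
    obtain ⟨n, hn⟩ := Aux.exists_comp_notMem hv1
    exact ⟨n, homogeneousComponent n v, homogeneousComponent_isHomogeneous n v, hcm2 v hv2 n, hn⟩
  obtain ⟨x, hxh, hxI2, hxI1⟩ := Nat.sSup_mem hT'ne ⟨s1, fun n hn => hT'b n hn⟩
  have hxmax : ∀ t : Fin e, X t * x ∈ I1 := by
    intro t; by_contra hc
    have hmem : sSup {n : ℕ | ∃ u : MvPolynomial (Fin e) k,
        u.IsHomogeneous n ∧ u ∈ I2 ∧ u ∉ I1} + 1 ∈ {n : ℕ | ∃ u : MvPolynomial (Fin e) k,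
        u.IsHomogeneous n ∧ u ∈ I2 ∧ u ∉ I1} := by
      refine ⟨X t * x, ?_, Ideal.mul_mem_left _ _ hxI2, hc⟩
      have hmul := (isHomogeneous_X k t).mul hxh
      rwa [add_comm] at hmul
    have := le_csSup ⟨s1, fun n hn => hT'b n hn⟩ hmem
    omega
  have hxq1 : ∀ r ∈ qIdeal k e, r * x ∈ I1 := Aux.mul_mem_of_forall_X_mul hxmax
  have hxdeg := Aux.socle_concentration hcm1 h1gor hs1 hxh hxI1 hxq1
  rw [hxdeg] at hxh
  have hxcolon : x ∈ (I1 ⊓ I2).colon (qIdeal k e) :=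
    Aux.mem_colon_of_forall fun r hr => ⟨hxq1 r hr, Ideal.mul_mem_left _ _ hxI2⟩
  have hxJ : x ∉ I1 ⊓ I2 := fun hx => hxI1 hx.1
  have hxval : sSup {i : ℕ | x ∈ qIdeal k e ^ i ⊔ (I1 ⊓ I2)} = s1 := by
    apply Aux.sSup_val_eq
    · exact Submodule.mem_sup_left (Aux.homog_mem_qpow hxh)
    · intro hmem
      obtain ⟨uu, hu, vv, hv, huv⟩ := Submodule.mem_sup.1 hmem
      apply hxI1
      have hcompx : homogeneousComponent s1 x = x := by
        rw [homogeneousComponent_of_mem hxh, if_pos rfl]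
      have hsplit : homogeneousComponent s1 x
          = homogeneousComponent s1 uu + homogeneousComponent s1 vv := by
        rw [← map_add, huv]
      rw [← hcompx, hsplit, Aux.comp_eq_zero_of_mem_qpow hu (by omega), zero_add]
      exact (hcmJ vv hv s1).1
  obtain ⟨x0, y0, hcolon0, hcond0⟩ := htype2
  have hP0 : Aux.Pind (I1 ⊓ I2) x0 y0 := Aux.pind_of_cond hcond0
  have hsupJ : qIdeal k e ^ (s + 1) ⊔ (I1 ⊓ I2) = I1 ⊓ I2 := sup_eq_right.2 hs.2
  -- obtain a partner y of valuation s
  obtain ⟨y, hycolon, hPxy, hyval⟩ : ∃ y, y ∈ (I1 ⊓ I2).colon (qIdeal k e) ∧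
      Aux.Pind (I1 ⊓ I2) x y ∧ y ∈ qIdeal k e ^ s ⊔ (I1 ⊓ I2) := by
    by_cases hcase : s1 = s
    · -- entire socle is contained in q^s ⊔ J
      have hsoc_sub : ∀ u ∈ (I1 ⊓ I2).colon (qIdeal k e),
          u ∈ qIdeal k e ^ s ⊔ (I1 ⊓ I2) := by
        intro u hu
        apply Aux.mem_of_comps_mem
        intro n
        have hcompu : homogeneousComponent n u ∈ (I1 ⊓ I2).colon (qIdeal k e) :=
          Aux.compsMem_colon hcmJ u hu n
        by_cases hJn : homogeneousComponent n u ∈ I1 ⊓ I2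
        · exact Submodule.mem_sup_right hJn
        · have hqn := Aux.forall_of_mem_colon hcompu
          have hdegn : n = s := by
            rcases not_and_or.1 (fun hand => hJn ⟨hand.1, hand.2⟩) with hn1 | hn2
            · have := Aux.socle_concentration hcm1 h1gor hs1
                (homogeneousComponent_isHomogeneous n u) hn1
                (fun r hr => ((hqn r hr).1 : _))
              omega
            · have := Aux.socle_concentration hcm2 h2gor hs2
                (homogeneousComponent_isHomogeneous n u) hn2
                (fun r hr => ((hqn r hr).2 : _))
              omega
          exact Submodule.mem_sup_left
            (Aux.homog_mem_qpow (hdegn ▸ homogeneousComponent_isHomogeneous n u))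
      have hx0c : x0 ∈ (I1 ⊓ I2).colon (qIdeal k e) := by
        rw [hcolon0]; exact Submodule.mem_sup_right (Ideal.subset_span (by simp))
      have hy0c : y0 ∈ (I1 ⊓ I2).colon (qIdeal k e) := by
        rw [hcolon0]; exact Submodule.mem_sup_right (Ideal.subset_span (by simp))
      rcases Aux.pind_or hP0 hxJ with hPx | hPx
      · exact ⟨x0, hx0c, hPx, hsoc_sub x0 hx0c⟩
      · exact ⟨y0, hy0c, hPx, hsoc_sub y0 hy0c⟩
    · -- s1 < s : use a homogeneous socle element of degree s
      obtain ⟨z, hzh, hzJ⟩ := Aux.exists_homog_socle hcmJ hs.1 hs.2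
      have hzcolon : z ∈ (I1 ⊓ I2).colon (qIdeal k e) := by
        apply Aux.mem_colon_of_forall
        intro r hr
        apply hs.2
        rw [pow_succ, mul_comm]
        exact Ideal.mul_mem_mul hr (Aux.homog_mem_qpow hzh)
      have hPxz : Aux.Pind (I1 ⊓ I2) x z := by
        intro α β hm
        have hcs1 := hcmJ _ hm s1
        have hcs := hcmJ _ hm s
        rw [map_add, homogeneousComponent_C_mul, homogeneousComponent_C_mul,
          homogeneousComponent_of_mem hxh, homogeneousComponent_of_mem hzh,
          if_pos rfl, if_neg (by omega : s1 ≠ s), mul_zero, add_zero] at hcs1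
        rw [map_add, homogeneousComponent_C_mul, homogeneousComponent_C_mul,
          homogeneousComponent_of_mem hxh, homogeneousComponent_of_mem hzh,
          if_neg (by omega : s ≠ s1), if_pos rfl, mul_zero, zero_add] at hcs
        constructor
        · by_contra hα
          apply hxJ
          have hxx : x = C α⁻¹ * (C α * x) := by
            rw [← mul_assoc, ← map_mul, inv_mul_cancel₀ hα, map_one, one_mul]
          rw [hxx]; exact Ideal.mul_mem_left _ _ hcs1
        · by_contra hβ
          apply hzJ
          have hzz : z = C β⁻¹ * (C β * z) := by
            rw [← mul_assoc, ← map_mul, inv_mul_cancel₀ hβ, map_one, one_mul]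
          rw [hzz]; exact Ideal.mul_mem_left _ _ hcs
      exact ⟨z, hzcolon, hPxz, Submodule.mem_sup_left (Aux.homog_mem_qpow hzh)⟩
  have hyvals : sSup {i : ℕ | y ∈ qIdeal k e ^ i ⊔ (I1 ⊓ I2)} = s := by
    apply Aux.sSup_val_eq hyval
    rw [hsupJ]
    exact hPxy.notMem_right
  refine ⟨⟨x, y, Aux.colon_span_swap hcolon0 hxcolon hycolon hPxy,
    Aux.cond_of_pind (Aux.forall_of_mem_colon hxcolon)
      (Aux.forall_of_mem_colon hycolon) hPxy, hxval, hyvals⟩, haval⟩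
end
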